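/- arXiv:2309.01056 — 4 statements merged into one kernel-verified Lean document; each statement's English description precedes it below -/
import Mathlib

section
/- Suppose there is a fixed matrix A ∈ ℝ^{a×b} with f_ℓ(x) = A g_ℓ(x) for every ℓ = 1,…,p and every x ∈ 𝒳 (each f_ℓ is the same fixed linear function of g_ℓ; in particular f_ℓ is contained in the span of g_ℓ's components). Let F be a joint distribution of (X,T,Y) with Y square-integrable, and let c, c' ∈ ℝ be any two constants such that the pooled Gram matrices Σ_{ℓ=1}^p E_F[((T−c) f_ℓ(X), g_ℓ(X)) ((T−c) f_ℓ(X), g_ℓ(X))ᵀ] and Σ_{ℓ=1}^p E_F[((T−c') f_ℓ(X), g_ℓ(X)) ((T−c') f_ℓ(X), g_ℓ(X))ᵀ] are both invertible. Then the θ-component of the unique minimizer of E_F[Σ_{ℓ=1}^p (Y_ℓ − θᵀ(T−c) f_ℓ(X) − βᵀ g_ℓ(X))²] is the same as the θ-component of the unique minimizer of E_F[Σ_{ℓ=1}^p (Y_ℓ − θᵀ(T−c') f_ℓ(X) − βᵀ g_ℓ(X))²]; i.e., centering the treatment does not change the regression coefficient on the interaction block. -/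
open MeasureTheory ProbabilityTheory Matrix
open scoped ENNReal

noncomputable section

/-- The population least-squares objective
`E_F[Σ_ℓ (Y_ℓ − θᵀ(T−c) f_ℓ(X) − βᵀ g_ℓ(X))²]` with treatment centered at `c`. -/
noncomputable def lsObj {Ω 𝒳 : Type*} [MeasurableSpace Ω]
    {p a b : ℕ} (F : Measure Ω) (X : Ω → 𝒳) (T : Ω → ℝ) (Y : Ω → Fin p → ℝ)
    (f : Fin p → 𝒳 → Fin a → ℝ) (g : Fin p → 𝒳 → Fin b → ℝ)
    (c : ℝ) (θβ : (Fin a → ℝ) × (Fin b → ℝ)) : ℝ :=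
  ∫ ω, ∑ ℓ, (Y ω ℓ - (∑ i, θβ.1 i * ((T ω - c) * f ℓ (X ω) i))
      - ∑ j, θβ.2 j * g ℓ (X ω) j) ^ 2 ∂F

/-- The pooled Gram matrix
`Σ_ℓ E_F[((T−c) f_ℓ(X), g_ℓ(X)) ((T−c) f_ℓ(X), g_ℓ(X))ᵀ]`,
indexed by `Fin a ⊕ Fin b`. -/
noncomputable def pooledGram {Ω 𝒳 : Type*} [MeasurableSpace Ω]
    {p a b : ℕ} (F : Measure Ω) (X : Ω → 𝒳) (T : Ω → ℝ)
    (f : Fin p → 𝒳 → Fin a → ℝ) (g : Fin p → 𝒳 → Fin b → ℝ)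
    (c : ℝ) : Matrix (Fin a ⊕ Fin b) (Fin a ⊕ Fin b) ℝ :=
  Matrix.of fun i j => ∑ ℓ, ∫ ω,
    (Sum.elim (fun i' => (T ω - c) * f ℓ (X ω) i') (fun j' => g ℓ (X ω) j') i) *
    (Sum.elim (fun i' => (T ω - c) * f ℓ (X ω) i') (fun j' => g ℓ (X ω) j') j) ∂F

namespace Stmt1Aux

theorem sum_sum_sum_comm {α β γ M : Type*} [AddCommMonoid M]
    [Fintype α] [Fintype β] [Fintype γ] (f : α → β → γ → M) :
    ∑ i : α, ∑ j : β, ∑ k : γ, f i j k = ∑ j : β, ∑ k : γ, ∑ i : α, f i j k := by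
  rw [Finset.sum_comm]
  exact Finset.sum_congr rfl fun j _ => Finset.sum_comm

/-- Pure linear algebra: a quadratic function with symmetric PSD invertible
Hessian has a unique minimizer. -/
theorem quad_min {n : Type*} [Fintype n] [DecidableEq n]
    (J : (n → ℝ) → ℝ) (C : ℝ) (m : n → ℝ) (G : Matrix n n ℝ)
    (hJ : ∀ v, J v = C - 2 * (v ⬝ᵥ m) + v ⬝ᵥ (G *ᵥ v))
    (hsymm : ∀ u w : n → ℝ, u ⬝ᵥ (G *ᵥ w) = w ⬝ᵥ (G *ᵥ u))
    (hpsd : ∀ w, 0 ≤ w ⬝ᵥ (G *ᵥ w)) (hG : IsUnit G) :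
    ∃! v : n → ℝ, ∀ q, J v ≤ J q := by
  have hdet : IsUnit G.det := (Matrix.isUnit_iff_isUnit_det G).mp hG
  -- expansion
  have hexp : ∀ v w, J (v + w) = J v + 2 * ((G *ᵥ v - m) ⬝ᵥ w) + w ⬝ᵥ (G *ᵥ w) := by
    intro v w
    have h1 : (v + w) ⬝ᵥ (G *ᵥ (v + w))
        = v ⬝ᵥ (G *ᵥ v) + 2 * (w ⬝ᵥ (G *ᵥ v)) + w ⬝ᵥ (G *ᵥ w) := by
      rw [Matrix.mulVec_add, dotProduct_add, add_dotProduct,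
        add_dotProduct, hsymm v w]
      ring
    rw [hJ, hJ, h1, add_dotProduct, sub_dotProduct,
      dotProduct_comm (G *ᵥ v) w, dotProduct_comm m w]
    ring
  -- characterization of minimizers
  have hiff : ∀ v : n → ℝ, (∀ q, J v ≤ J q) ↔ G *ᵥ v = m := by
    intro v
    constructor
    · intro hmin
      have hzero : ∀ w : n → ℝ, (G *ᵥ v - m) ⬝ᵥ w = 0 := by
        intro w
        set L := (G *ᵥ v - m) ⬝ᵥ w with hL
        set Q := w ⬝ᵥ (G *ᵥ w) with hQ
        have hQ0 : 0 ≤ Q := hpsd w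
        have key : ∀ t : ℝ, 0 ≤ 2 * (t * L) + t ^ 2 * Q := by
          intro t
          have := hmin (v + t • w)
          have hts : J (v + t • w)
              = J v + 2 * (t * L) + t ^ 2 * Q := by
            rw [hexp v (t • w)]
            have h2 : (G *ᵥ v - m) ⬝ᵥ (t • w) = t * L := by
              rw [dotProduct_smul]; simp [hL, smul_eq_mul]
            have h3 : (t • w) ⬝ᵥ (G *ᵥ (t • w)) = t ^ 2 * Q := by
              rw [Matrix.mulVec_smul, smul_dotProduct, dotProduct_smul]
              simp [hQ, smul_eq_mul]; ring
            rw [h2, h3]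
          have h := hmin (v + t • w)
          rw [hts] at h
          linarith
        have hkey := key (-L / (Q + 1))
        have hQ1 : (0:ℝ) < Q + 1 := by linarith
        have h4 : 0 ≤ -(L ^ 2) * (Q + 2) := by
          have h5 := mul_nonneg hkey (sq_nonneg (Q + 1))
          have h6 : (2 * (-L / (Q + 1) * L) + (-L / (Q + 1)) ^ 2 * Q) * (Q + 1) ^ 2
              = -(L ^ 2) * (Q + 2) := by
            field_simp
            ring
          nlinarith [h5, h6, hQ1]
        have hL2 : L ^ 2 ≤ 0 := by nlinarith
        have hL20 : L ^ 2 = 0 := le_antisymm hL2 (sq_nonneg L)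
        exact pow_eq_zero_iff (two_ne_zero) |>.mp hL20
      have : G *ᵥ v - m = 0 := by
        funext k
        have := hzero (Pi.single k 1)
        rwa [dotProduct_single, mul_one] at this
      have := sub_eq_zero.mp this
      exact this
    · intro heq q
      have := hexp v (q - v)
      rw [add_sub_cancel] at this
      rw [this, heq, sub_self, zero_dotProduct]
      have := hpsd (q - v)
      linarith
  -- existence and uniqueness
  refine ⟨G⁻¹ *ᵥ m, (hiff _).mpr ?_, fun v hv => ?_⟩
  · rw [Matrix.mulVec_mulVec, Matrix.mul_nonsing_inv G hdet, Matrix.one_mulVec]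
  · have h1 : G *ᵥ v = m := (hiff v).mp hv
    have : G⁻¹ *ᵥ (G *ᵥ v) = G⁻¹ *ᵥ m := by rw [h1]
    rwa [Matrix.mulVec_mulVec, Matrix.nonsing_inv_mul G hdet, Matrix.one_mulVec] at this


/-- the pooled feature vector -/
def Zv {Ω 𝒳 : Type*} {p a b : ℕ} (X : Ω → 𝒳) (T : Ω → ℝ)
    (f : Fin p → 𝒳 → Fin a → ℝ) (g : Fin p → 𝒳 → Fin b → ℝ) (d : ℝ)
    (ℓ : Fin p) (ω : Ω) : (Fin a ⊕ Fin b) → ℝ :=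
  Sum.elim (fun i' => (T ω - d) * f ℓ (X ω) i') (fun j' => g ℓ (X ω) j')

/-- the least squares objective on pooled vectors -/
noncomputable def Jv {Ω 𝒳 : Type*} [MeasurableSpace Ω] {p a b : ℕ}
    (F : Measure Ω) (X : Ω → 𝒳) (T : Ω → ℝ) (Y : Ω → Fin p → ℝ)
    (f : Fin p → 𝒳 → Fin a → ℝ) (g : Fin p → 𝒳 → Fin b → ℝ) (d : ℝ)
    (v : (Fin a ⊕ Fin b) → ℝ) : ℝ :=
  ∫ ω, ∑ ℓ, (Y ω ℓ - ∑ k, v k * Zv X T f g d ℓ ω k) ^ 2 ∂F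

theorem exists_unique_min
    {Ω 𝒳 : Type*} [MeasurableSpace Ω] [MeasurableSpace 𝒳]
    {p a b : ℕ}
    (F : Measure Ω) [IsProbabilityMeasure F]
    (X : Ω → 𝒳) (T : Ω → ℝ) (Y : Ω → Fin p → ℝ)
    (f : Fin p → 𝒳 → Fin a → ℝ) (g : Fin p → 𝒳 → Fin b → ℝ)
    (hX : Measurable X) (hT : Measurable T)
    (hf : ∀ ℓ, Measurable (f ℓ)) (hg : ∀ ℓ, Measurable (g ℓ))
    (hY2 : ∀ ℓ, MemLp (fun ω => Y ω ℓ) 2 F)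
    (d : ℝ)
    (hGramInt : ∀ ℓ, ∀ i j : Fin a ⊕ Fin b,
      Integrable (fun ω =>
        (Sum.elim (fun i' => (T ω - d) * f ℓ (X ω) i') (fun j' => g ℓ (X ω) j') i) *
        (Sum.elim (fun i' => (T ω - d) * f ℓ (X ω) i') (fun j' => g ℓ (X ω) j') j)) F)
    (hG : IsUnit (pooledGram F X T f g d)) :
    ∃! θβ : (Fin a → ℝ) × (Fin b → ℝ),
      ∀ θβ', lsObj F X T Y f g d θβ ≤ lsObj F X T Y f g d θβ' := by
  classical
  set Z := Zv X T f g d with hZdef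
  -- measurability of features
  have hZmeas : ∀ ℓ k, Measurable fun ω => Z ℓ ω k := by
    intro ℓ k
    cases k with
    | inl i =>
        show Measurable fun ω => (T ω - d) * f ℓ (X ω) i
        exact (hT.sub measurable_const).mul
          ((measurable_pi_apply i).comp ((hf ℓ).comp hX))
    | inr j =>
        show Measurable fun ω => g ℓ (X ω) j
        exact (measurable_pi_apply j).comp ((hg ℓ).comp hX)
  -- integrability facts
  have intZZ : ∀ ℓ k k', Integrable (fun ω => Z ℓ ω k * Z ℓ ω k') F := fun ℓ k k' =>
    hGramInt ℓ k k'
  have hZ2 : ∀ ℓ k, MemLp (fun ω => Z ℓ ω k) 2 F := by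
    intro ℓ k
    refine (memLp_two_iff_integrable_sq (hZmeas ℓ k).aestronglyMeasurable).mpr ?_
    simpa [sq] using intZZ ℓ k k
  have intY2 : ∀ ℓ, Integrable (fun ω => Y ω ℓ ^ 2) F := fun ℓ =>
    (memLp_two_iff_integrable_sq (hY2 ℓ).aestronglyMeasurable).mp (hY2 ℓ)
  have intYZ : ∀ ℓ k, Integrable (fun ω => Y ω ℓ * Z ℓ ω k) F := by
    intro ℓ k
    have h := MemLp.smul (p := 2) (q := 2) (r := 1) (hZ2 ℓ k) (hY2 ℓ)
      (hpqr := ⟨by rw [inv_one]; exact ENNReal.inv_two_add_inv_two⟩)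
    simpa [Pi.smul_apply', smul_eq_mul, Pi.mul_def] using memLp_one_iff_integrable.mp h
  -- the Gram matrix and moment vector
  set G := pooledGram F X T f g d with hGdef
  have hGapp : ∀ k k', G k k' = ∑ ℓ, ∫ ω, Z ℓ ω k * Z ℓ ω k' ∂F := fun k k' => rfl
  set m : (Fin a ⊕ Fin b) → ℝ := fun k => ∑ ℓ, ∫ ω, Y ω ℓ * Z ℓ ω k ∂F with hmdef
  set C : ℝ := ∑ ℓ, ∫ ω, Y ω ℓ ^ 2 ∂F with hCdef
  -- quadratic representation
  have hJq : ∀ v, Jv F X T Y f g d v = C - 2 * (v ⬝ᵥ m) + v ⬝ᵥ (G *ᵥ v) := by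
    intro v
    have hpt : ∀ ω, ∑ ℓ, (Y ω ℓ - ∑ k, v k * Z ℓ ω k) ^ 2
        = ∑ ℓ, (Y ω ℓ) ^ 2 - ∑ ℓ, ∑ k, 2 * (v k * (Y ω ℓ * Z ℓ ω k))
          + ∑ ℓ, ∑ k, ∑ k', v k * v k' * (Z ℓ ω k * Z ℓ ω k') := by
      intro ω
      rw [← Finset.sum_sub_distrib, ← Finset.sum_add_distrib]
      refine Finset.sum_congr rfl fun ℓ _ => ?_
      have h1 : (∑ k, v k * Z ℓ ω k) * (∑ k', v k' * Z ℓ ω k')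
          = ∑ k, ∑ k', v k * v k' * (Z ℓ ω k * Z ℓ ω k') := by
        rw [Finset.sum_mul_sum]
        exact Finset.sum_congr rfl fun k _ => Finset.sum_congr rfl fun k' _ => by ring
      have h2 : Y ω ℓ * (∑ k, v k * Z ℓ ω k) = ∑ k, v k * (Y ω ℓ * Z ℓ ω k) := by
        rw [Finset.mul_sum]
        exact Finset.sum_congr rfl fun k _ => by ring
      have h3 : ∑ k, 2 * (v k * (Y ω ℓ * Z ℓ ω k))
          = 2 * ∑ k, v k * (Y ω ℓ * Z ℓ ω k) := by
        rw [Finset.mul_sum]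
      rw [h3, ← h2, ← h1]
      ring
    have i1 : Integrable (fun ω => ∑ ℓ, (Y ω ℓ) ^ 2) F :=
      integrable_finset_sum _ fun ℓ _ => intY2 ℓ
    have i2 : Integrable (fun ω => ∑ ℓ, ∑ k, 2 * (v k * (Y ω ℓ * Z ℓ ω k))) F :=
      integrable_finset_sum _ fun ℓ _ => integrable_finset_sum _ fun k _ =>
        ((intYZ ℓ k).const_mul _).const_mul _
    have i3 : Integrable (fun ω => ∑ ℓ, ∑ k, ∑ k', v k * v k' * (Z ℓ ω k * Z ℓ ω k')) F :=
      integrable_finset_sum _ fun ℓ _ => integrable_finset_sum _ fun k _ =>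
        integrable_finset_sum _ fun k' _ => (intZZ ℓ k k').const_mul _
    have : Jv F X T Y f g d v
        = ∫ ω, (∑ ℓ, (Y ω ℓ) ^ 2 - ∑ ℓ, ∑ k, 2 * (v k * (Y ω ℓ * Z ℓ ω k))
          + ∑ ℓ, ∑ k, ∑ k', v k * v k' * (Z ℓ ω k * Z ℓ ω k')) ∂F := by
      unfold Jv
      exact integral_congr_ae (Filter.Eventually.of_forall hpt)
    have i12 : Integrable (fun ω => ∑ ℓ, (Y ω ℓ) ^ 2
        - ∑ ℓ, ∑ k, 2 * (v k * (Y ω ℓ * Z ℓ ω k))) F := i1.sub i2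
    rw [this, integral_add i12 i3, integral_sub i1 i2]
    have e1 : ∫ ω, ∑ ℓ, (Y ω ℓ) ^ 2 ∂F = C := by
      rw [integral_finset_sum _ fun ℓ _ => intY2 ℓ]
    have e2 : ∫ ω, ∑ ℓ, ∑ k, 2 * (v k * (Y ω ℓ * Z ℓ ω k)) ∂F = 2 * (v ⬝ᵥ m) := by
      rw [integral_finset_sum _ fun ℓ _ => integrable_finset_sum _ fun k _ =>
        ((intYZ ℓ k).const_mul _).const_mul _]
      have : ∀ ℓ : Fin p, ∫ ω, ∑ k, 2 * (v k * (Y ω ℓ * Z ℓ ω k)) ∂F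
          = ∑ k, 2 * (v k * ∫ ω, Y ω ℓ * Z ℓ ω k ∂F) := by
        intro ℓ
        rw [integral_finset_sum _ fun k _ => ((intYZ ℓ k).const_mul _).const_mul _]
        refine Finset.sum_congr rfl fun k _ => ?_
        rw [integral_const_mul, integral_const_mul]
      rw [Finset.sum_congr rfl fun ℓ _ => this ℓ, Finset.sum_comm]
      simp only [dotProduct, hmdef, Finset.mul_sum]
    have e3 : ∫ ω, ∑ ℓ, ∑ k, ∑ k', v k * v k' * (Z ℓ ω k * Z ℓ ω k') ∂F
        = v ⬝ᵥ (G *ᵥ v) := by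
      have hint : ∀ ℓ : Fin p, ∫ ω, ∑ k, ∑ k', v k * v k' * (Z ℓ ω k * Z ℓ ω k') ∂F
          = ∑ k, ∑ k', v k * v k' * ∫ ω, Z ℓ ω k * Z ℓ ω k' ∂F := by
        intro ℓ
        rw [integral_finset_sum _ fun k _ => integrable_finset_sum _ fun k' _ =>
          (intZZ ℓ k k').const_mul _]
        refine Finset.sum_congr rfl fun k _ => ?_
        rw [integral_finset_sum _ fun k' _ => (intZZ ℓ k k').const_mul _]
        exact Finset.sum_congr rfl fun k' _ => integral_const_mul _ _
      rw [integral_finset_sum _ fun ℓ _ => integrable_finset_sum _ fun k _ =>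
        integrable_finset_sum _ fun k' _ => (intZZ ℓ k k').const_mul _]
      rw [Finset.sum_congr rfl fun ℓ _ => hint ℓ, Finset.sum_comm]
      simp only [dotProduct, Matrix.mulVec, hGapp, Finset.mul_sum, Finset.sum_mul]
      refine Finset.sum_congr rfl fun k _ => ?_
      rw [Finset.sum_comm]
      refine Finset.sum_congr rfl fun k' _ => ?_
      exact Finset.sum_congr rfl fun ℓ _ => by ring
    rw [e1, e2, e3]
  -- symmetry
  have hGsymm : ∀ k k', G k k' = G k' k := by
    intro k k'
    rw [hGapp, hGapp]
    exact Finset.sum_congr rfl fun ℓ _ => by simp_rw [mul_comm]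
  have hsymm : ∀ u w : (Fin a ⊕ Fin b) → ℝ, u ⬝ᵥ (G *ᵥ w) = w ⬝ᵥ (G *ᵥ u) := by
    intro u w
    simp only [dotProduct, Matrix.mulVec, Finset.mul_sum]
    rw [Finset.sum_comm]
    refine Finset.sum_congr rfl fun k _ => Finset.sum_congr rfl fun k' _ => ?_
    rw [hGsymm k' k]
    ring
  -- positive semidefiniteness
  have hpsd : ∀ w : (Fin a ⊕ Fin b) → ℝ, 0 ≤ w ⬝ᵥ (G *ᵥ w) := by
    intro w
    have hsq : ∀ ℓ : Fin p, ∫ ω, (∑ k, w k * Z ℓ ω k) ^ 2 ∂F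
        = ∑ k, ∑ k', w k * w k' * ∫ ω, Z ℓ ω k * Z ℓ ω k' ∂F := by
      intro ℓ
      have hpt : ∀ ω, (∑ k, w k * Z ℓ ω k) ^ 2
          = ∑ k, ∑ k', w k * w k' * (Z ℓ ω k * Z ℓ ω k') := by
        intro ω
        rw [sq, Finset.sum_mul_sum]
        exact Finset.sum_congr rfl fun k _ => Finset.sum_congr rfl fun k' _ => by ring
      rw [integral_congr_ae (Filter.Eventually.of_forall hpt),
        integral_finset_sum _ fun k _ => integrable_finset_sum _ fun k' _ =>
          (intZZ ℓ k k').const_mul _]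
      refine Finset.sum_congr rfl fun k _ => ?_
      rw [integral_finset_sum _ fun k' _ => (intZZ ℓ k k').const_mul _]
      exact Finset.sum_congr rfl fun k' _ => integral_const_mul _ _
    have hval : w ⬝ᵥ (G *ᵥ w) = ∑ ℓ, ∫ ω, (∑ k, w k * Z ℓ ω k) ^ 2 ∂F := by
      have h7 : ∑ ℓ : Fin p, ∑ k, ∑ k', w k * w k' * ∫ ω, Z ℓ ω k * Z ℓ ω k' ∂F
          = ∑ k, ∑ k', ∑ ℓ : Fin p, w k * w k' * ∫ ω, Z ℓ ω k * Z ℓ ω k' ∂F :=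
        sum_sum_sum_comm _
      rw [Finset.sum_congr rfl fun ℓ _ => hsq ℓ, h7]
      simp only [dotProduct, Matrix.mulVec, hGapp, Finset.mul_sum, Finset.sum_mul]
      refine Finset.sum_congr rfl fun k _ => Finset.sum_congr rfl fun k' _ =>
        Finset.sum_congr rfl fun ℓ _ => by ring
    rw [hval]
    exact Finset.sum_nonneg fun ℓ _ =>
      integral_nonneg fun ω => sq_nonneg _
  -- unique minimizer on vectors
  obtain ⟨v, hv, huniq⟩ := quad_min (Jv F X T Y f g d) C m G hJq hsymm hpsd hG
  -- bridge between pairs and vectors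
  have bridge : ∀ θβ : (Fin a → ℝ) × (Fin b → ℝ),
      lsObj F X T Y f g d θβ = Jv F X T Y f g d (Sum.elim θβ.1 θβ.2) := by
    intro θβ
    unfold lsObj Jv
    refine integral_congr_ae (Filter.Eventually.of_forall fun ω => ?_)
    refine Finset.sum_congr rfl fun ℓ _ => ?_
    rw [Fintype.sum_sum_type]
    simp only [Sum.elim_inl, Sum.elim_inr, hZdef, Zv, sub_sub]
  have helim : ∀ u : (Fin a ⊕ Fin b) → ℝ,
      Sum.elim (fun i => u (Sum.inl i)) (fun j => u (Sum.inr j)) = u := by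
    intro u; funext k; cases k <;> rfl
  refine ⟨(fun i => v (Sum.inl i), fun j => v (Sum.inr j)), ?_, ?_⟩
  · intro q
    rw [bridge, bridge]
    simp only
    rw [helim v]
    exact hv _
  · intro θβ hmin
    have hv' : ∀ u, Jv F X T Y f g d (Sum.elim θβ.1 θβ.2) ≤ Jv F X T Y f g d u := by
      intro u
      have := hmin (fun i => u (Sum.inl i), fun j => u (Sum.inr j))
      rw [bridge, bridge] at this
      simpa [helim u] using this
    have heq := huniq _ hv'
    exact Prod.ext (funext fun i => congrFun heq (Sum.inl i))
      (funext fun j => congrFun heq (Sum.inr j))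

theorem lsObj_reparam
    {Ω 𝒳 : Type*} [MeasurableSpace Ω]
    {p a b : ℕ}
    (F : Measure Ω)
    (X : Ω → 𝒳) (T : Ω → ℝ) (Y : Ω → Fin p → ℝ)
    (f : Fin p → 𝒳 → Fin a → ℝ) (g : Fin p → 𝒳 → Fin b → ℝ)
    (A : Matrix (Fin a) (Fin b) ℝ)
    (hA : ∀ ℓ, ∀ x, f ℓ x = A *ᵥ g ℓ x)
    (c c' : ℝ) (q : (Fin a → ℝ) × (Fin b → ℝ)) :
    lsObj F X T Y f g c q
      = lsObj F X T Y f g c'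
        (q.1, fun j => q.2 j + (c' - c) * ∑ i, q.1 i * A i j) := by
  unfold lsObj
  refine integral_congr_ae (Filter.Eventually.of_forall fun ω => ?_)
  refine Finset.sum_congr rfl fun ℓ _ => ?_
  have hfg : ∀ i, f ℓ (X ω) i = ∑ j, A i j * g ℓ (X ω) j := by
    intro i
    rw [hA ℓ (X ω)]
    simp [Matrix.mulVec, dotProduct]
  have expand : ∀ t : ℝ, ∑ i, q.1 i * (t * f ℓ (X ω) i)
      = ∑ j, (t * ∑ i, q.1 i * A i j) * g ℓ (X ω) j := by
    intro t
    simp_rw [hfg, Finset.mul_sum]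
    rw [Finset.sum_comm]
    refine Finset.sum_congr rfl fun j _ => ?_
    rw [Finset.sum_mul]
    refine Finset.sum_congr rfl fun i _ => ?_
    ring
  rw [expand (T ω - c), expand (T ω - c'), sub_sub, sub_sub]
  congr 1
  rw [← Finset.sum_add_distrib, ← Finset.sum_add_distrib]
  congr 1
  refine Finset.sum_congr rfl fun j _ => ?_
  simp only
  ring

end Stmt1Aux

/-- if each `f_ℓ = A g_ℓ` for a fixed matrix `A` (so `f_ℓ` lies in
the span of the components of `g_ℓ`), then centering the treatment at `c`
versus `c'` does not change the θ-component of the (unique) population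
least-squares minimizer, provided both pooled Gram matrices are invertible. -/
theorem statement1
    {Ω 𝒳 : Type*} [MeasurableSpace Ω] [MeasurableSpace 𝒳]
    {p a b : ℕ}
    (F : Measure Ω) [IsProbabilityMeasure F]
    (X : Ω → 𝒳) (T : Ω → ℝ) (Y : Ω → Fin p → ℝ)
    (f : Fin p → 𝒳 → Fin a → ℝ) (g : Fin p → 𝒳 → Fin b → ℝ)
    (hX : Measurable X) (hT : Measurable T) (hY : Measurable Y)
    (hf : ∀ ℓ, Measurable (f ℓ)) (hg : ∀ ℓ, Measurable (g ℓ))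
    (hT01 : ∀ ω, T ω = 0 ∨ T ω = 1)
    (hY2 : ∀ ℓ, MemLp (fun ω => Y ω ℓ) 2 F)
    -- each f_ℓ is the same fixed linear function of g_ℓ
    (A : Matrix (Fin a) (Fin b) ℝ)
    (hA : ∀ ℓ, ∀ x, f ℓ x = A *ᵥ g ℓ x)
    (c c' : ℝ)
    -- all displayed expectations are finite
    (hobjInt : ∀ d : ℝ, ∀ θβ : (Fin a → ℝ) × (Fin b → ℝ),
      Integrable (fun ω => ∑ ℓ, (Y ω ℓ - (∑ i, θβ.1 i * ((T ω - d) * f ℓ (X ω) i))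
        - ∑ j, θβ.2 j * g ℓ (X ω) j) ^ 2) F)
    (hGramInt : ∀ d : ℝ, ∀ ℓ, ∀ i j : Fin a ⊕ Fin b,
      Integrable (fun ω =>
        (Sum.elim (fun i' => (T ω - d) * f ℓ (X ω) i') (fun j' => g ℓ (X ω) j') i) *
        (Sum.elim (fun i' => (T ω - d) * f ℓ (X ω) i') (fun j' => g ℓ (X ω) j') j)) F)
    -- both pooled Gram matrices are invertible
    (hGc : IsUnit (pooledGram F X T f g c))
    (hGc' : IsUnit (pooledGram F X T f g c')) :
    (∃! θβ : (Fin a → ℝ) × (Fin b → ℝ),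
      ∀ θβ', lsObj F X T Y f g c θβ ≤ lsObj F X T Y f g c θβ') ∧
    (∃! θβ : (Fin a → ℝ) × (Fin b → ℝ),
      ∀ θβ', lsObj F X T Y f g c' θβ ≤ lsObj F X T Y f g c' θβ') ∧
    (∀ θβ θβ' : (Fin a → ℝ) × (Fin b → ℝ),
      (∀ q, lsObj F X T Y f g c θβ ≤ lsObj F X T Y f g c q) →
      (∀ q, lsObj F X T Y f g c' θβ' ≤ lsObj F X T Y f g c' q) →
      θβ.1 = θβ'.1) := by
  have h1 := Stmt1Aux.exists_unique_min F X T Y f g hX hT hf hg hY2 c (hGramInt c) hGc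
  have h2 := Stmt1Aux.exists_unique_min F X T Y f g hX hT hf hg hY2 c' (hGramInt c') hGc'
  refine ⟨h1, h2, ?_⟩
  intro θβ θβ' hm hm'
  set φ : (Fin a → ℝ) × (Fin b → ℝ) → (Fin a → ℝ) × (Fin b → ℝ) :=
    fun q => (q.1, fun j => q.2 j + (c' - c) * ∑ i, q.1 i * A i j) with hφ
  set ψ : (Fin a → ℝ) × (Fin b → ℝ) → (Fin a → ℝ) × (Fin b → ℝ) :=
    fun q => (q.1, fun j => q.2 j + (c - c') * ∑ i, q.1 i * A i j) with hψ
  have hφψ : ∀ u, φ (ψ u) = u := by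
    intro u
    refine Prod.ext rfl ?_
    funext j
    show u.2 j + (c - c') * _ + (c' - c) * _ = u.2 j
    ring
  have hrep : ∀ q, lsObj F X T Y f g c q = lsObj F X T Y f g c' (φ q) :=
    fun q => Stmt1Aux.lsObj_reparam F X T Y f g A hA c c' q
  have hrep' : ∀ q, lsObj F X T Y f g c' q = lsObj F X T Y f g c (ψ q) :=
    fun q => Stmt1Aux.lsObj_reparam F X T Y f g A hA c' c q
  have hmin' : ∀ u, lsObj F X T Y f g c' (φ θβ) ≤ lsObj F X T Y f g c' u := by
    intro u
    rw [← hrep θβ]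
    calc lsObj F X T Y f g c θβ ≤ lsObj F X T Y f g c (ψ u) := hm _
    _ = lsObj F X T Y f g c' (φ (ψ u)) := hrep _
    _ = lsObj F X T Y f g c' u := by rw [hφψ]
  obtain ⟨w, hw, hwu⟩ := h2
  have e1 := hwu _ hmin'
  have e2 := hwu _ hm'
  have heq : φ θβ = θβ' := e1.trans e2.symm
  calc θβ.1 = (φ θβ).1 := rfl
  _ = θβ'.1 := by rw [heq]


end
end

section
/- Let (X,T,Y) be random elements with T Bernoulli(π), 0 < π < 1, independent of X, and Y ∈ ℝ integrable. Let μ_1, μ_0 : 𝒳 → ℝ be measurable functions such that μ_t(X) is a version of the conditional expectation of Y given σ(X) under the conditional probability measure ℙ(· ∣ T = t), for t = 1 and t = 0. Then π(1−π)·(μ_1(X) − μ_0(X)) is a version of the conditional expectation E[(T−π) Y ∣ σ(X)] under ℙ. In particular, for every bounded measurable h : 𝒳 → ℝ, E[(T−π) Y h(X)] = π(1−π) E[(μ_1(X) − μ_0(X)) h(X)]. -/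
open MeasureTheory ProbabilityTheory
open scoped ENNReal

noncomputable section

section Aux

variable {Ω 𝒳 : Type*} [MeasurableSpace Ω] [MeasurableSpace 𝒳]

lemma aux_measurable_comap {X : Ω → 𝒳} : Measurable[MeasurableSpace.comap X ‹MeasurableSpace 𝒳›] X :=
  fun s hs => ⟨s, hs, rfl⟩

/-- independence step: set integral over a level set of T of a function of X. -/
lemma aux_ind (P : Measure Ω) [IsProbabilityMeasure P]
    (X : Ω → 𝒳) (T : Ω → ℝ) (hX : Measurable X) (hT : Measurable T)
    (hindep : IndepFun T X P) (c : ℝ) (g : 𝒳 → ℝ) (hg : Measurable g) :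
    ∫ ω in T ⁻¹' {c}, g (X ω) ∂P = (P (T ⁻¹' {c})).toReal * ∫ ω, g (X ω) ∂P := by
  set φ : ℝ → ℝ := ({c} : Set ℝ).indicator (fun _ => (1:ℝ)) with hφdef
  have hφm : Measurable φ := measurable_one.indicator (measurableSet_singleton c)
  have hI : IndepFun (fun ω => φ (T ω)) (fun ω => g (X ω)) P :=
    hindep.comp hφm hg
  have h1 : ∫ ω, φ (T ω) * g (X ω) ∂P
      = (∫ ω, φ (T ω) ∂P) * ∫ ω, g (X ω) ∂P := by
    exact hI.integral_fun_mul_eq_mul_integral ((hφm.comp hT).aestronglyMeasurable)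
      ((hg.comp hX).aestronglyMeasurable)
  have h2 : ∀ ω, φ (T ω) * g (X ω)
      = (T ⁻¹' {c}).indicator (fun ω => g (X ω)) ω := by
    intro ω
    by_cases hω : T ω = c <;>
      simp [hφdef, Set.indicator_apply, hω]
  have h3 : (fun ω => φ (T ω)) = (T ⁻¹' {c}).indicator (1 : Ω → ℝ) := by
    funext ω
    by_cases hω : T ω = c <;> simp [hφdef, Set.indicator_apply, hω]
  have hmc : MeasurableSet (T ⁻¹' {c}) := hT (measurableSet_singleton c)
  calc ∫ ω in T ⁻¹' {c}, g (X ω) ∂P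
      = ∫ ω, (T ⁻¹' {c}).indicator (fun ω => g (X ω)) ω ∂P :=
        (integral_indicator hmc).symm
    _ = ∫ ω, φ (T ω) * g (X ω) ∂P := by
        refine integral_congr_ae (Filter.Eventually.of_forall fun ω => ?_)
        simpa using (h2 ω).symm
    _ = (∫ ω, φ (T ω) ∂P) * ∫ ω, g (X ω) ∂P := h1
    _ = (P (T ⁻¹' {c})).toReal * ∫ ω, g (X ω) ∂P := by
        rw [h3, integral_indicator_one hmc, measureReal_def]

/-- main step: set integral of Y·h(X) over B in terms of μ·h. -/
lemma aux_step (P : Measure Ω) [IsProbabilityMeasure P]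
    (X : Ω → 𝒳) (hX : Measurable X) (Y : Ω → ℝ) (hYint : Integrable Y P)
    (B : Set Ω) (hB : MeasurableSet B) (p : ℝ) (hp : 0 < p)
    (hPB : P B = ENNReal.ofReal p)
    (hind : ∀ g : 𝒳 → ℝ, Measurable g →
      ∫ ω in B, g (X ω) ∂P = p * ∫ ω, g (X ω) ∂P)
    (μ : 𝒳 → ℝ) (hμm : Measurable μ) (hμint : Integrable (fun ω => μ (X ω)) P)
    (hμ : (fun ω => μ (X ω)) =ᵐ[P[|B]]
      MeasureTheory.condExp (MeasurableSpace.comap X ‹MeasurableSpace 𝒳›) (P[|B]) Y)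
    (h : 𝒳 → ℝ) (hh : Measurable h) (C : ℝ) (hC : ∀ x, |h x| ≤ C) :
    ∫ ω in B, Y ω * h (X ω) ∂P = p * ∫ ω, μ (X ω) * h (X ω) ∂P := by
  have hPBne : P B ≠ 0 := by
    rw [hPB]; simpa using hp
  have hPinvne : (ENNReal.ofReal p)⁻¹ ≠ ∞ := by
    simpa using hp
  have hν : P[|B] = (ENNReal.ofReal p)⁻¹ • P.restrict B := by
    rw [ProbabilityTheory.cond, hPB]
  have hprob : IsProbabilityMeasure (P[|B]) := cond_isProbabilityMeasure hPBne
  -- integral formula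
  have hform : ∀ f : Ω → ℝ, ∫ ω, f ω ∂(P[|B]) = p⁻¹ * ∫ ω in B, f ω ∂P := by
    intro f
    rw [hν, integral_smul_measure, ENNReal.toReal_inv, ENNReal.toReal_ofReal hp.le,
      smul_eq_mul]
  -- integrability transfer
  have htrans : ∀ f : Ω → ℝ, Integrable f P → Integrable f (P[|B]) := by
    intro f hf
    rw [hν]
    exact (hf.restrict).smul_measure hPinvne
  have hm := hX.comap_le
  set m := MeasurableSpace.comap X ‹MeasurableSpace 𝒳› with hmdef
  have hhXm : StronglyMeasurable[m] (fun ω => h (X ω)) :=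
    (hh.comp aux_measurable_comap).stronglyMeasurable
  have hYν : Integrable Y (P[|B]) := htrans Y hYint
  have hhXY : Integrable (fun ω => h (X ω) * Y ω) (P[|B]) :=
    hYν.bdd_mul (c := C) ((hh.comp hX).aestronglyMeasurable)
      (Filter.Eventually.of_forall fun ω => by simpa using hC (X ω))
  have hkey : ∫ ω, h (X ω) * Y ω ∂(P[|B]) = ∫ ω, h (X ω) * μ (X ω) ∂(P[|B]) := by
    have hmul : (P[|B])[(fun ω => h (X ω)) * Y | m]
        =ᵐ[P[|B]] (fun ω => h (X ω)) * (P[|B])[Y | m] :=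
      condExp_mul_of_stronglyMeasurable_left hhXm (by exact hhXY) hYν
    calc ∫ ω, h (X ω) * Y ω ∂(P[|B])
        = ∫ ω, ((fun ω => h (X ω)) * Y) ω ∂(P[|B]) := rfl
      _ = ∫ ω, ((P[|B])[(fun ω => h (X ω)) * Y | m]) ω ∂(P[|B]) :=
          (integral_condExp (μ := P[|B]) (f := (fun ω => h (X ω)) * Y) hm).symm
      _ = ∫ ω, h (X ω) * ((P[|B])[Y | m]) ω ∂(P[|B]) := by
          refine integral_congr_ae ?_
          filter_upwards [hmul] with ω hω
          simpa using hω
      _ = ∫ ω, h (X ω) * μ (X ω) ∂(P[|B]) := by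
          refine integral_congr_ae ?_
          filter_upwards [hμ] with ω hω
          rw [hω]
  have h1 : ∫ ω in B, Y ω * h (X ω) ∂P = p * ∫ ω, Y ω * h (X ω) ∂(P[|B]) := by
    rw [hform]; field_simp
  have h2 : ∫ ω, μ (X ω) * h (X ω) ∂(P[|B]) = ∫ ω, μ (X ω) * h (X ω) ∂P := by
    rw [hform]
    rw [show (∫ ω in B, μ (X ω) * h (X ω) ∂P) = ∫ ω in B, (fun x => μ x * h x) (X ω) ∂P from rfl,
      hind (fun x => μ x * h x) (hμm.mul hh)]
    field_simp
  rw [h1, ← h2]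
  congr 1
  calc ∫ ω, Y ω * h (X ω) ∂(P[|B]) = ∫ ω, h (X ω) * Y ω ∂(P[|B]) := by
        simp_rw [mul_comm]
    _ = ∫ ω, h (X ω) * μ (X ω) ∂(P[|B]) := hkey
    _ = ∫ ω, μ (X ω) * h (X ω) ∂(P[|B]) := by simp_rw [mul_comm]

end Aux

/-- if `T ~ Bernoulli(π)` is independent of `X` and `Y` is
integrable, and `μ_t(X)` is a version of `E[Y ∣ σ(X)]` under `P(·∣T=t)`, then
`π(1−π)(μ_1(X) − μ_0(X))` is a version of `E[(T−π)Y ∣ σ(X)]` under `P`; in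
particular `E[(T−π) Y h(X)] = π(1−π) E[(μ_1(X) − μ_0(X)) h(X)]` for every
bounded measurable `h`. -/
theorem statement3
    {Ω 𝒳 : Type*} [MeasurableSpace Ω] [MeasurableSpace 𝒳]
    (P : Measure Ω) [IsProbabilityMeasure P]
    (X : Ω → 𝒳) (T : Ω → ℝ) (Y : Ω → ℝ)
    (hX : Measurable X) (hT : Measurable T) (hY : Measurable Y)
    (π : ℝ) (hπ0 : 0 < π) (hπ1 : π < 1)
    (hT01 : ∀ ω, T ω = 0 ∨ T ω = 1)
    (hTπ : P {ω | T ω = 1} = ENNReal.ofReal π)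
    (hindep : IndepFun T X P)
    (hYint : Integrable Y P)
    (μ1 μ0 : 𝒳 → ℝ) (hμ1m : Measurable μ1) (hμ0m : Measurable μ0)
    (hμ1 : (fun ω => μ1 (X ω)) =ᵐ[P[|{ω | T ω = 1}]]
      MeasureTheory.condExp (MeasurableSpace.comap X ‹MeasurableSpace 𝒳›)
        (P[|{ω | T ω = 1}]) Y)
    (hμ0 : (fun ω => μ0 (X ω)) =ᵐ[P[|{ω | T ω = 0}]]
      MeasureTheory.condExp (MeasurableSpace.comap X ‹MeasurableSpace 𝒳›)
        (P[|{ω | T ω = 0}]) Y)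
    (hμ1int : Integrable (fun ω => μ1 (X ω)) P)
    (hμ0int : Integrable (fun ω => μ0 (X ω)) P) :
    ((fun ω => π * (1 - π) * (μ1 (X ω) - μ0 (X ω))) =ᵐ[P]
      MeasureTheory.condExp (MeasurableSpace.comap X ‹MeasurableSpace 𝒳›) P
        (fun ω => (T ω - π) * Y ω)) ∧
    (∀ h : 𝒳 → ℝ, Measurable h → (∃ C : ℝ, ∀ x, |h x| ≤ C) →
      ∫ ω, (T ω - π) * Y ω * h (X ω) ∂P
        = π * (1 - π) * ∫ ω, (μ1 (X ω) - μ0 (X ω)) * h (X ω) ∂P) := by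
  have hB1eq : {ω | T ω = 1} = T ⁻¹' {1} := rfl
  have hB0eq : {ω | T ω = 0} = T ⁻¹' {0} := rfl
  have hB1 : MeasurableSet {ω | T ω = 1} := hT (measurableSet_singleton 1)
  have hB0 : MeasurableSet {ω | T ω = 0} := hT (measurableSet_singleton 0)
  have hB0compl : {ω | T ω = 0} = {ω | T ω = 1}ᶜ := by
    ext ω
    rcases hT01 ω with h0 | h1
    · simp [h0]
    · simp [h1]
  have hPB0 : P {ω | T ω = 0} = ENNReal.ofReal (1 - π) := by
    rw [hB0compl, measure_compl hB1 (measure_ne_top P _), hTπ, measure_univ]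
    rw [ENNReal.ofReal_sub 1 hπ0.le, ENNReal.ofReal_one]
  -- independence facts
  have hind1 : ∀ g : 𝒳 → ℝ, Measurable g →
      ∫ ω in {ω | T ω = 1}, g (X ω) ∂P = π * ∫ ω, g (X ω) ∂P := by
    intro g hg
    rw [hB1eq, aux_ind P X T hX hT hindep 1 g hg, ← hB1eq, hTπ,
      ENNReal.toReal_ofReal hπ0.le]
  have hind0 : ∀ g : 𝒳 → ℝ, Measurable g →
      ∫ ω in {ω | T ω = 0}, g (X ω) ∂P = (1 - π) * ∫ ω, g (X ω) ∂P := by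
    intro g hg
    rw [hB0eq, aux_ind P X T hX hT hindep 0 g hg, ← hB0eq, hPB0,
      ENNReal.toReal_ofReal (by linarith)]
  -- Part 2 first
  have part2 : ∀ h : 𝒳 → ℝ, Measurable h → (∃ C : ℝ, ∀ x, |h x| ≤ C) →
      ∫ ω, (T ω - π) * Y ω * h (X ω) ∂P
        = π * (1 - π) * ∫ ω, (μ1 (X ω) - μ0 (X ω)) * h (X ω) ∂P := by
    rintro h hh ⟨C, hC⟩
    have hf : Integrable (fun ω => Y ω * h (X ω)) P := by
      have := hYint.bdd_mul (c := C) ((hh.comp hX).aestronglyMeasurable)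
        (Filter.Eventually.of_forall fun ω => by simpa using hC (X ω))
      refine this.congr (Filter.Eventually.of_forall fun ω => mul_comm _ _)
    have hpt : ∀ ω, (T ω - π) * Y ω * h (X ω)
        = (1 - π) * ({ω | T ω = 1}).indicator (fun ω => Y ω * h (X ω)) ω
          - π * ({ω | T ω = 0}).indicator (fun ω => Y ω * h (X ω)) ω := by
      intro ω
      rcases hT01 ω with h0 | h1
      · have h1' : ¬ (T ω = 1) := by rw [h0]; norm_num
        simp [Set.indicator_apply, h0, h1']
        ring
      · have h0' : ¬ (T ω = 0) := by rw [h1]; norm_num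
        simp [Set.indicator_apply, h1, h0']
        ring
    have hint1 : Integrable (({ω | T ω = 1}).indicator (fun ω => Y ω * h (X ω))) P :=
      hf.indicator hB1
    have hint0 : Integrable (({ω | T ω = 0}).indicator (fun ω => Y ω * h (X ω))) P :=
      hf.indicator hB0
    have step1 : ∫ ω in {ω | T ω = 1}, Y ω * h (X ω) ∂P
        = π * ∫ ω, μ1 (X ω) * h (X ω) ∂P :=
      aux_step P X hX Y hYint _ hB1 π hπ0 hTπ hind1 μ1 hμ1m hμ1int hμ1 h hh C hC
    have step0 : ∫ ω in {ω | T ω = 0}, Y ω * h (X ω) ∂P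
        = (1 - π) * ∫ ω, μ0 (X ω) * h (X ω) ∂P :=
      aux_step P X hX Y hYint _ hB0 (1 - π) (by linarith) hPB0 hind0 μ0 hμ0m hμ0int hμ0 h hh C hC
    have hsplit : ∫ ω, (T ω - π) * Y ω * h (X ω) ∂P
        = (1 - π) * (∫ ω in {ω | T ω = 1}, Y ω * h (X ω) ∂P)
          - π * (∫ ω in {ω | T ω = 0}, Y ω * h (X ω) ∂P) := by
      rw [← integral_indicator hB1, ← integral_indicator hB0,
        ← integral_const_mul, ← integral_const_mul,
        ← integral_sub ((hint1.const_mul _)) ((hint0.const_mul _))]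
      exact integral_congr_ae (Filter.Eventually.of_forall hpt)
    have hμ1h : Integrable (fun ω => μ1 (X ω) * h (X ω)) P :=
      (hμ1int.bdd_mul (c := C) ((hh.comp hX).aestronglyMeasurable)
        (Filter.Eventually.of_forall fun ω => by simpa using hC (X ω))).congr
        (Filter.Eventually.of_forall fun ω => mul_comm _ _)
    have hμ0h : Integrable (fun ω => μ0 (X ω) * h (X ω)) P :=
      (hμ0int.bdd_mul (c := C) ((hh.comp hX).aestronglyMeasurable)
        (Filter.Eventually.of_forall fun ω => by simpa using hC (X ω))).congr
        (Filter.Eventually.of_forall fun ω => mul_comm _ _)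
    have hdiff : ∫ ω, (μ1 (X ω) - μ0 (X ω)) * h (X ω) ∂P
        = ∫ ω, μ1 (X ω) * h (X ω) ∂P - ∫ ω, μ0 (X ω) * h (X ω) ∂P := by
      rw [← integral_sub hμ1h hμ0h]
      exact integral_congr_ae (Filter.Eventually.of_forall fun ω => by ring)
    rw [hsplit, step1, step0, hdiff]
    ring
  refine ⟨?_, part2⟩
  -- Part 1
  have hm := hX.comap_le
  have hfint : Integrable (fun ω => (T ω - π) * Y ω) P := by
    refine hYint.bdd_mul (c := 1) ((hT.sub measurable_const).aestronglyMeasurable) (Filter.Eventually.of_forall fun ω => ?_)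
    rcases hT01 ω with h0 | h1
    · rw [h0]; rw [Real.norm_eq_abs, abs_sub_comm, abs_of_nonneg (by linarith)]; linarith
    · rw [h1]; rw [Real.norm_eq_abs, abs_of_nonneg (by linarith)]; linarith
  have hgint : Integrable (fun ω => π * (1 - π) * (μ1 (X ω) - μ0 (X ω))) P :=
    ((hμ1int.sub hμ0int).const_mul _)
  refine ae_eq_condExp_of_forall_setIntegral_eq hm hfint
    (fun s _ _ => hgint.integrableOn) ?_ ?_
  · rintro s ⟨A, hA, rfl⟩ -
    set h : 𝒳 → ℝ := A.indicator (fun _ => (1:ℝ)) with hhdef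
    have hh : Measurable h := measurable_one.indicator hA
    have hCb : ∀ x, |h x| ≤ 1 := by
      intro x
      by_cases hx : x ∈ A <;> simp [hhdef, Set.indicator_apply, hx]
    have hkey := part2 h hh ⟨1, hCb⟩
    have hsA : MeasurableSet (X ⁻¹' A) := hX hA
    have e1 : ∫ ω in X ⁻¹' A, π * (1 - π) * (μ1 (X ω) - μ0 (X ω)) ∂P
        = π * (1 - π) * ∫ ω, (μ1 (X ω) - μ0 (X ω)) * h (X ω) ∂P := by
      rw [← integral_indicator hsA, ← integral_const_mul]
      refine integral_congr_ae (Filter.Eventually.of_forall fun ω => ?_)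
      by_cases hx : X ω ∈ A <;>
        simp [hhdef, Set.indicator_apply, hx]
    have e2 : ∫ ω in X ⁻¹' A, (T ω - π) * Y ω ∂P
        = ∫ ω, (T ω - π) * Y ω * h (X ω) ∂P := by
      rw [← integral_indicator hsA]
      refine integral_congr_ae (Filter.Eventually.of_forall fun ω => ?_)
      by_cases hx : X ω ∈ A <;>
        simp [hhdef, Set.indicator_apply, hx]
    rw [e1, e2, hkey]
  · exact StronglyMeasurable.aestronglyMeasurable
      (((hμ1m.comp (aux_measurable_comap (X := X))).sub
        (hμ0m.comp (aux_measurable_comap (X := X)))).const_mul _).stronglyMeasurable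
end
end

section
/- (Numerator identity under a linear conditional average treatment effect.) Let Q be a joint distribution of (X,T,Y) under which T is Bernoulli(π), 0 < π < 1, independent of X, and Y is square-integrable, and let P be another distribution with P_X absolutely continuous with respect to Q_X. Let τ_ℓ : 𝒳 → ℝ be measurable with τ_ℓ(X) a version of E_Q[Y_ℓ ∣ X, T=1] − E_Q[Y_ℓ ∣ X, T=0], let φ : 𝒳 → ℝ^d be measurable, and let w : 𝒳 → [0,∞) be measurable with E_Q[w(X) φ(X)] = E_P[φ(X)]. If there is a matrix B₀ ∈ ℝ^{a×d} with Σ_{ℓ=1}^p f_ℓ(x) τ_ℓ(x) = B₀ φ(x) for Q_X-almost every x, then Σ_{ℓ=1}^p E_Q[w(X) (T−π) f_ℓ(X) Y_ℓ] = π(1−π) Σ_{ℓ=1}^p E_P[f_ℓ(X) τ_ℓ(X)]. -/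
open MeasureTheory ProbabilityTheory Matrix
open scoped ENNReal

noncomputable section

lemma aux_group
    {Ω : Type*} {m : MeasurableSpace Ω} [m0 : MeasurableSpace Ω] (hm : m ≤ m0)
    (Q : Measure Ω) [IsProbabilityMeasure Q] {s : Set Ω} (hs : MeasurableSet s)
    {r : ℝ} (hr0 : 0 < r) (hQs : Q s = ENNReal.ofReal r)
    (htrim : ∀ t : Set Ω, MeasurableSet[m] t → Q[|s] t = Q t)
    {F G : Ω → ℝ} (hF : StronglyMeasurable[m] F)
    (hG : Integrable G Q) (hFG : Integrable (fun ω => F ω * G ω) (Q.restrict s)) :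
    Integrable (fun ω => F ω * (MeasureTheory.condExp m (Q[|s]) G) ω) Q ∧
      ∫ ω in s, F ω * G ω ∂Q
        = r * ∫ ω, F ω * (MeasureTheory.condExp m (Q[|s]) G) ω ∂Q := by
  have hQs0 : Q s ≠ 0 := by
    rw [hQs]; exact (ENNReal.ofReal_pos.mpr hr0).ne'
  have hQsne : (Q s)⁻¹ ≠ ∞ := by
    simp [ENNReal.inv_ne_top, hQs0]
  haveI hQ1 : IsProbabilityMeasure (Q[|s]) := cond_isProbabilityMeasure hQs0
  have htrimEq : (Q[|s]).trim hm = Q.trim hm := by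
    refine @Measure.ext Ω m _ _ (fun t ht => ?_)
    rw [trim_measurableSet_eq hm ht, trim_measurableSet_eq hm ht, htrim t ht]
  have hcond_def : Q[|s] = (Q s)⁻¹ • Q.restrict s := rfl
  have hGQ1 : Integrable G (Q[|s]) := by
    rw [hcond_def]; exact (hG.restrict).smul_measure hQsne
  have hFGQ1 : Integrable (F * G) (Q[|s]) := by
    rw [hcond_def]; exact hFG.smul_measure hQsne
  have hmul := condExp_mul_of_stronglyMeasurable_left hF hFGQ1 hGQ1
  have hintQ1 : Integrable (fun ω => F ω * (MeasureTheory.condExp m (Q[|s]) G) ω) (Q[|s]) := by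
    refine (integrable_condExp (m := m) (f := F * G)).congr ?_
    filter_upwards [hmul] with ω hω
    simpa using hω
  have hsm : StronglyMeasurable[m] (fun ω => F ω * (MeasureTheory.condExp m (Q[|s]) G) ω) :=
    hF.mul stronglyMeasurable_condExp
  have hintQ : Integrable (fun ω => F ω * (MeasureTheory.condExp m (Q[|s]) G) ω) Q := by
    have h1 := hintQ1.trim hm hsm
    rw [htrimEq] at h1
    exact integrable_of_integrable_trim hm h1
  have heqQ : ∫ ω, F ω * (MeasureTheory.condExp m (Q[|s]) G) ω ∂(Q[|s])
      = ∫ ω, F ω * (MeasureTheory.condExp m (Q[|s]) G) ω ∂Q := by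
    rw [integral_trim hm hsm, htrimEq, ← integral_trim hm hsm]
  have hcondint : ∫ ω, F ω * G ω ∂(Q[|s])
      = ∫ ω, F ω * (MeasureTheory.condExp m (Q[|s]) G) ω ∂(Q[|s]) := by
    have h1 : ∫ ω, F ω * G ω ∂(Q[|s]) = ∫ ω, (F * G) ω ∂(Q[|s]) := rfl
    rw [h1, ← integral_condExp hm (f := F * G)]
    refine integral_congr_ae ?_
    filter_upwards [hmul] with ω hω
    simpa using hω
  have hsmul : ∫ ω, F ω * G ω ∂(Q[|s]) = r⁻¹ * ∫ ω in s, F ω * G ω ∂Q := by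
    rw [hcond_def, integral_smul_measure, hQs]
    rw [smul_eq_mul, ENNReal.toReal_inv, ENNReal.toReal_ofReal hr0.le]
  refine ⟨hintQ, ?_⟩
  have hfin : ∫ ω in s, F ω * G ω ∂Q = r * ∫ ω, F ω * G ω ∂(Q[|s]) := by
    rw [hsmul, ← mul_assoc, mul_inv_cancel₀ hr0.ne', one_mul]
  rw [hfin, hcondint, heqQ]


/-- numerator identity under a linear conditional average
treatment effect. If `w` balances `φ` between `Q` and `P` and
`Σ_ℓ f_ℓ τ_ℓ = B₀ φ` holds `Q_X`-a.e., then
`Σ_ℓ E_Q[w(X)(T−π) f_ℓ(X) Y_ℓ] = π(1−π) Σ_ℓ E_P[f_ℓ(X) τ_ℓ(X)]`. -/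
theorem statement9
    {Ω 𝒳 : Type*} [MeasurableSpace Ω] [MeasurableSpace 𝒳]
    {p a d : ℕ}
    (P Q : Measure Ω) [IsProbabilityMeasure P] [IsProbabilityMeasure Q]
    (X : Ω → 𝒳) (T : Ω → ℝ) (Y : Ω → Fin p → ℝ)
    (f : Fin p → 𝒳 → Fin a → ℝ)
    (hX : Measurable X) (hT : Measurable T) (hY : Measurable Y)
    (hf : ∀ ℓ, Measurable (f ℓ))
    (π : ℝ) (hπ0 : 0 < π) (hπ1 : π < 1)
    (hT01 : ∀ ω, T ω = 0 ∨ T ω = 1)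
    (hTπQ : Q {ω | T ω = 1} = ENNReal.ofReal π)
    (hindepQ : IndepFun T X Q)
    (hY2 : ∀ ℓ, MemLp (fun ω => Y ω ℓ) 2 Q)
    -- covariate overlap: P_X ≪ Q_X
    (habs : P.map X ≪ Q.map X)
    -- τ_ℓ(X) is a version of E_Q[Y_ℓ ∣ X, T=1] − E_Q[Y_ℓ ∣ X, T=0]
    (τ : Fin p → 𝒳 → ℝ) (hτm : ∀ ℓ, Measurable (τ ℓ))
    (hτ : ∀ ℓ, (fun ω => τ ℓ (X ω)) =ᵐ[Q]
      fun ω => (MeasureTheory.condExp (MeasurableSpace.comap X ‹MeasurableSpace 𝒳›)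
          (Q[|{ω' | T ω' = 1}]) (fun ω' => Y ω' ℓ)) ω
        - (MeasureTheory.condExp (MeasurableSpace.comap X ‹MeasurableSpace 𝒳›)
          (Q[|{ω' | T ω' = 0}]) (fun ω' => Y ω' ℓ)) ω)
    -- balancing features and weight
    (φ : 𝒳 → Fin d → ℝ) (hφ : Measurable φ)
    (w : 𝒳 → ℝ) (hwm : Measurable w) (hw0 : ∀ x, 0 ≤ w x)
    (hbal : ∀ k, ∫ ω, w (X ω) * φ (X ω) k ∂Q = ∫ ω, φ (X ω) k ∂P)
    -- linear CATE: Σ_ℓ f_ℓ τ_ℓ = B₀ φ, Q_X-a.e.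
    (B₀ : Matrix (Fin a) (Fin d) ℝ)
    (hB₀ : ∀ᵐ x ∂(Q.map X), ∀ i : Fin a, ∑ ℓ, f ℓ x i * τ ℓ x = (B₀ *ᵥ φ x) i)
    -- all displayed expectations are finite
    (hNumInt : ∀ ℓ, ∀ i : Fin a,
      Integrable (fun ω => w (X ω) * ((T ω - π) * f ℓ (X ω) i) * Y ω ℓ) Q)
    (hτInt : ∀ ℓ, ∀ i : Fin a, Integrable (fun ω => f ℓ (X ω) i * τ ℓ (X ω)) P)
    (hφIntP : ∀ k, Integrable (fun ω => φ (X ω) k) P)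
    (hφIntQ : ∀ k, Integrable (fun ω => w (X ω) * φ (X ω) k) Q) :
    ∀ i : Fin a,
      ∑ ℓ, ∫ ω, w (X ω) * ((T ω - π) * f ℓ (X ω) i) * Y ω ℓ ∂Q
        = π * (1 - π) * ∑ ℓ, ∫ ω, f ℓ (X ω) i * τ ℓ (X ω) ∂P := by
  intro i
  have hm : MeasurableSpace.comap X ‹MeasurableSpace 𝒳› ≤ ‹MeasurableSpace Ω› := hX.comap_le
  set s1 : Set Ω := {ω | T ω = 1} with hs1_def
  set s0 : Set Ω := {ω | T ω = 0} with hs0_def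
  have hs1p : s1 = T ⁻¹' {1} := rfl
  have hs0p : s0 = T ⁻¹' {0} := rfl
  have hs1 : MeasurableSet s1 := hT (measurableSet_singleton 1)
  have hs0 : MeasurableSet s0 := hT (measurableSet_singleton 0)
  have hcompl : s0 = s1ᶜ := by
    ext ω
    simp only [hs1_def, hs0_def, Set.mem_setOf_eq, Set.mem_compl_iff]
    rcases hT01 ω with h | h <;> simp [h]
  have hQs1 : Q s1 = ENNReal.ofReal π := hTπQ
  have hQs0 : Q s0 = ENNReal.ofReal (1 - π) := by
    rw [hcompl, measure_compl hs1 (measure_ne_top _ _), hQs1, measure_univ,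
      ENNReal.ofReal_sub 1 hπ0.le, ENNReal.ofReal_one]
  have h1π : (0:ℝ) < 1 - π := by linarith
  -- trim-equality hypotheses via independence
  have htrim1 : ∀ t : Set Ω, MeasurableSet[MeasurableSpace.comap X ‹MeasurableSpace 𝒳›] t → Q[|s1] t = Q t := by
    intro t ht
    obtain ⟨A, hA, rfl⟩ := ht
    rw [cond_apply hs1, hs1p,
      hindepQ.measure_inter_preimage_eq_mul {1} A (measurableSet_singleton 1) hA, ← mul_assoc,
      ENNReal.inv_mul_cancel, one_mul]
    · rw [← hs1p, hQs1]; exact (ENNReal.ofReal_pos.mpr hπ0).ne'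
    · exact measure_ne_top _ _
  have htrim0 : ∀ t : Set Ω, MeasurableSet[MeasurableSpace.comap X ‹MeasurableSpace 𝒳›] t → Q[|s0] t = Q t := by
    intro t ht
    obtain ⟨A, hA, rfl⟩ := ht
    rw [cond_apply hs0, hs0p,
      hindepQ.measure_inter_preimage_eq_mul {0} A (measurableSet_singleton 0) hA, ← mul_assoc,
      ENNReal.inv_mul_cancel, one_mul]
    · rw [← hs0p, hQs0]; exact (ENNReal.ofReal_pos.mpr h1π).ne'
    · exact measure_ne_top _ _
  -- basic integrability
  have hYQ : ∀ ℓ, Integrable (fun ω => Y ω ℓ) Q := fun ℓ => (hY2 ℓ).integrable one_le_two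
  have hFsm : ∀ ℓ, StronglyMeasurable[MeasurableSpace.comap X ‹MeasurableSpace 𝒳›] (fun ω => w (X ω) * f ℓ (X ω) i) := by
    intro ℓ
    have hXm : Measurable[MeasurableSpace.comap X ‹MeasurableSpace 𝒳›] X := comap_measurable X
    exact ((hwm.comp hXm).mul ((measurable_pi_apply i).comp ((hf ℓ).comp hXm))).stronglyMeasurable
  have hIntS1 : ∀ ℓ,
      Integrable (fun ω => (w (X ω) * f ℓ (X ω) i) * Y ω ℓ) (Q.restrict s1) := by
    intro ℓ
    have h := (hNumInt ℓ i).restrict (s := s1)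
    have he : (fun ω => w (X ω) * ((T ω - π) * f ℓ (X ω) i) * Y ω ℓ)
        =ᵐ[Q.restrict s1] fun ω => (1 - π) * ((w (X ω) * f ℓ (X ω) i) * Y ω ℓ) := by
      filter_upwards [ae_restrict_mem hs1] with ω hω
      have h1 : T ω = 1 := hω
      rw [h1]; ring
    have h3 := (h.congr he).const_mul (1 - π)⁻¹
    refine h3.congr (Filter.Eventually.of_forall fun ω => ?_)
    simp only [← mul_assoc, inv_mul_cancel₀ h1π.ne', one_mul]
  have hIntS0 : ∀ ℓ,
      Integrable (fun ω => (w (X ω) * f ℓ (X ω) i) * Y ω ℓ) (Q.restrict s0) := by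
    intro ℓ
    have h := (hNumInt ℓ i).restrict (s := s0)
    have he : (fun ω => w (X ω) * ((T ω - π) * f ℓ (X ω) i) * Y ω ℓ)
        =ᵐ[Q.restrict s0] fun ω => (-π) * ((w (X ω) * f ℓ (X ω) i) * Y ω ℓ) := by
      filter_upwards [ae_restrict_mem hs0] with ω hω
      have h1 : T ω = 0 := hω
      rw [h1]; ring
    have h3 := (h.congr he).const_mul (-π)⁻¹
    refine h3.congr (Filter.Eventually.of_forall fun ω => ?_)
    simp only [← mul_assoc, inv_mul_cancel₀ (show (-π : ℝ) ≠ 0 by linarith), one_mul]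
  -- apply the group lemma
  have hA1 := fun ℓ => aux_group hm Q hs1 hπ0 hQs1 htrim1 (hFsm ℓ) (hYQ ℓ) (hIntS1 ℓ)
  have hA0 := fun ℓ => aux_group hm Q hs0 h1π hQs0 htrim0 (hFsm ℓ) (hYQ ℓ) (hIntS0 ℓ)
  -- per-ℓ integrability of F * τ(X) under Q
  have hτIntQ : ∀ ℓ,
      Integrable (fun ω => (w (X ω) * f ℓ (X ω) i) * τ ℓ (X ω)) Q := by
    intro ℓ
    refine ((hA1 ℓ).1.sub (hA0 ℓ).1).congr ?_
    filter_upwards [hτ ℓ] with ω hω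
    simp only [hs1_def, hs0_def, Pi.sub_apply] at hω ⊢
    rw [hω]; ring
  -- main per-ℓ identity
  have hmain : ∀ ℓ, ∫ ω, w (X ω) * ((T ω - π) * f ℓ (X ω) i) * Y ω ℓ ∂Q
      = π * (1 - π) * ∫ ω, (w (X ω) * f ℓ (X ω) i) * τ ℓ (X ω) ∂Q := by
    intro ℓ
    obtain ⟨hI1, hE1⟩ := hA1 ℓ
    obtain ⟨hI0, hE0⟩ := hA0 ℓ
    have hsplit : ∫ ω, w (X ω) * ((T ω - π) * f ℓ (X ω) i) * Y ω ℓ ∂Q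
        = (∫ ω in s1, w (X ω) * ((T ω - π) * f ℓ (X ω) i) * Y ω ℓ ∂Q)
          + ∫ ω in s0, w (X ω) * ((T ω - π) * f ℓ (X ω) i) * Y ω ℓ ∂Q := by
      rw [hcompl]
      exact (integral_add_compl hs1 (hNumInt ℓ i)).symm
    have hset1 : ∫ ω in s1, w (X ω) * ((T ω - π) * f ℓ (X ω) i) * Y ω ℓ ∂Q
        = (1 - π) * ∫ ω in s1, (w (X ω) * f ℓ (X ω) i) * Y ω ℓ ∂Q := by
      rw [← integral_const_mul]
      refine integral_congr_ae ?_
      filter_upwards [ae_restrict_mem hs1] with ω hω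
      have h1 : T ω = 1 := hω
      rw [h1]; ring
    have hset0 : ∫ ω in s0, w (X ω) * ((T ω - π) * f ℓ (X ω) i) * Y ω ℓ ∂Q
        = (-π) * ∫ ω in s0, (w (X ω) * f ℓ (X ω) i) * Y ω ℓ ∂Q := by
      rw [← integral_const_mul]
      refine integral_congr_ae ?_
      filter_upwards [ae_restrict_mem hs0] with ω hω
      have h1 : T ω = 0 := hω
      rw [h1]; ring
    have hdiff : ∫ ω, (w (X ω) * f ℓ (X ω) i) * τ ℓ (X ω) ∂Q
        = (∫ ω, (w (X ω) * f ℓ (X ω) i)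
              * (MeasureTheory.condExp (MeasurableSpace.comap X ‹MeasurableSpace 𝒳›) (Q[|s1]) (fun ω' => Y ω' ℓ)) ω ∂Q)
          - ∫ ω, (w (X ω) * f ℓ (X ω) i)
              * (MeasureTheory.condExp (MeasurableSpace.comap X ‹MeasurableSpace 𝒳›) (Q[|s0]) (fun ω' => Y ω' ℓ)) ω ∂Q := by
      rw [← integral_sub hI1 hI0]
      refine integral_congr_ae ?_
      filter_upwards [hτ ℓ] with ω hω
      simp only [hs1_def, hs0_def] at hω ⊢
      rw [hω]; ring
    rw [hsplit, hset1, hset0, hE1, hE0, hdiff]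
    ring
  -- transfer the linear-CATE hypothesis
  have hB₀Q : ∀ᵐ ω ∂Q, ∀ j : Fin a,
      ∑ ℓ, f ℓ (X ω) j * τ ℓ (X ω) = (B₀ *ᵥ φ (X ω)) j :=
    ae_of_ae_map hX.aemeasurable hB₀
  have hB₀P : ∀ᵐ ω ∂P, ∀ j : Fin a,
      ∑ ℓ, f ℓ (X ω) j * τ ℓ (X ω) = (B₀ *ᵥ φ (X ω)) j :=
    ae_of_ae_map hX.aemeasurable (Filter.Eventually.filter_mono habs.ae_le hB₀)
  have hmv : ∀ x, (B₀ *ᵥ φ x) i = ∑ k, B₀ i k * φ x k := fun x => rfl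
  calc ∑ ℓ, ∫ ω, w (X ω) * ((T ω - π) * f ℓ (X ω) i) * Y ω ℓ ∂Q
      = ∑ ℓ, π * (1 - π) * ∫ ω, (w (X ω) * f ℓ (X ω) i) * τ ℓ (X ω) ∂Q :=
        Finset.sum_congr rfl fun ℓ _ => hmain ℓ
    _ = π * (1 - π) * ∫ ω, ∑ ℓ, (w (X ω) * f ℓ (X ω) i) * τ ℓ (X ω) ∂Q := by
        rw [← Finset.mul_sum, integral_finset_sum _ fun ℓ _ => hτIntQ ℓ]
    _ = π * (1 - π) * ∫ ω, ∑ k, B₀ i k * (w (X ω) * φ (X ω) k) ∂Q := by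
        congr 1
        refine integral_congr_ae ?_
        filter_upwards [hB₀Q] with ω hω
        have h1 : ∑ ℓ, (w (X ω) * f ℓ (X ω) i) * τ ℓ (X ω)
            = w (X ω) * ∑ ℓ, f ℓ (X ω) i * τ ℓ (X ω) := by
          rw [Finset.mul_sum]; exact Finset.sum_congr rfl fun ℓ _ => by ring
        rw [h1, hω i, hmv, Finset.mul_sum]
        exact Finset.sum_congr rfl fun k _ => by ring
    _ = π * (1 - π) * ∑ k, B₀ i k * ∫ ω, w (X ω) * φ (X ω) k ∂Q := by
        rw [integral_finset_sum _ fun k _ => (hφIntQ k).const_mul _]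
        simp_rw [integral_const_mul]
    _ = π * (1 - π) * ∑ k, B₀ i k * ∫ ω, φ (X ω) k ∂P := by
        simp_rw [hbal]
    _ = π * (1 - π) * ∫ ω, ∑ k, B₀ i k * φ (X ω) k ∂P := by
        rw [integral_finset_sum _ fun k _ => (hφIntP k).const_mul _]
        simp_rw [integral_const_mul]
    _ = π * (1 - π) * ∫ ω, ∑ ℓ, f ℓ (X ω) i * τ ℓ (X ω) ∂P := by
        congr 1
        refine integral_congr_ae ?_
        filter_upwards [hB₀P] with ω hω
        rw [← hmv, ← hω i]
    _ = π * (1 - π) * ∑ ℓ, ∫ ω, f ℓ (X ω) i * τ ℓ (X ω) ∂P := by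
        rw [integral_finset_sum _ fun ℓ _ => hτInt ℓ i]

end
end

section
/- (Weighting by the true covariate density ratio identifies the transported coefficient, stated via conditional distributions.) Let 𝒳 be a standard Borel space and let P and Q be joint distributions of (X,T,Y) on 𝒳 × {0,1} × ℝ^p such that under Q, T is Bernoulli(π), 0 < π < 1, independent of X and Y is square-integrable, and P_X ≪ Q_X with w := dP_X/dQ_X. Let κ be a regular conditional distribution (Markov kernel) of Y given (X,T) under Q, and let F* := (law of (X,T) under P replaced so that X ∼ P_X and T Bernoulli(π) independent of X) ⊗ κ be the transported distribution, i.e., (X,T) ∼ P_X × Bernoulli(π) composed with κ. Assume Σ_{ℓ=1}^p E_P[f_ℓ(X) f_ℓ(X)ᵀ] and Σ_{ℓ=1}^p E_P[g_ℓ(X) g_ℓ(X)ᵀ] are invertible and all displayed integrals are finite. Then the θ-component of the unique minimizer over (θ,β) of E_Q[w(X) · Σ_{ℓ=1}^p (Y_ℓ − θᵀ(T−π) f_ℓ(X) − βᵀ g_ℓ(X))²] equals the θ-component of the unique minimizer over (θ,β) of E_{F*}[Σ_{ℓ=1}^p (Y_ℓ − θᵀ(T−π) f_ℓ(X) − βᵀ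 g_ℓ(X))²]. -/
open MeasureTheory ProbabilityTheory Matrix
open scoped ENNReal

noncomputable section

/- ### Auxiliary lemmas -/

private lemma dot_expand {ι : Type*} [Fintype ι] (A : Matrix ι ι ℝ) (u v : ι → ℝ) :
    u ⬝ᵥ A *ᵥ v = ∑ k, ∑ k', u k * v k' * A k k' := by
  simp only [dotProduct, mulVec, Finset.mul_sum]
  exact Finset.sum_congr rfl fun k _ => Finset.sum_congr rfl fun k' _ => by ring

private lemma pos_of_isUnit {n : Type*} [Fintype n] [DecidableEq n] {M : Matrix n n ℝ}
    (hsym : ∀ i j, M i j = M j i) (hpsd : ∀ x : n → ℝ, 0 ≤ x ⬝ᵥ M *ᵥ x)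
    (hunit : IsUnit M) {x : n → ℝ} (hx : x ≠ 0) : 0 < x ⬝ᵥ M *ᵥ x := by
  have hherm : M.IsHermitian := by
    ext i j; simpa using hsym j i
  have hps : M.PosSemidef := Matrix.PosSemidef.of_dotProduct_mulVec_nonneg hherm (fun y => by simpa using hpsd y)
  rcases (hpsd x).lt_or_eq with h | h
  · exact h
  · exfalso
    have h0 : M *ᵥ x = 0 := by
      have := (hps.dotProduct_mulVec_zero_iff x).mp (by simpa using h.symm)
      simpa using this
    have hinj := Matrix.mulVec_injective_iff_isUnit.mpr hunit
    exact hx (hinj (by simpa using h0))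

private lemma wsum_comb {γ : Type*} (s : Finset γ) (W x a b c' : ℝ) (F G H K : γ → ℝ)
    (h : ∀ i ∈ s, F i * x = a * G i + b * H i + c' * K i) :
    (W * ∑ i ∈ s, F i) * x
      = a * (W * ∑ i ∈ s, G i) + b * (W * ∑ i ∈ s, H i) + c' * (W * ∑ i ∈ s, K i) := by
  have key : (∑ i ∈ s, F i) * x = a * ∑ i ∈ s, G i + b * ∑ i ∈ s, H i + c' * ∑ i ∈ s, K i := by
    rw [Finset.sum_mul, Finset.mul_sum, Finset.mul_sum, Finset.mul_sum,
      ← Finset.sum_add_distrib, ← Finset.sum_add_distrib]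
    exact Finset.sum_congr rfl h
  calc (W * ∑ i ∈ s, F i) * x = W * ((∑ i ∈ s, F i) * x) := by ring
    _ = W * (a * ∑ i ∈ s, G i + b * ∑ i ∈ s, H i + c' * ∑ i ∈ s, K i) := by rw [key]
    _ = _ := by ring

private lemma integrable_qf {Ω : Type*} [MeasurableSpace Ω]
    {ι : Type*} [Fintype ι] {p : ℕ}
    (F : Measure Ω) (c : Ω → Fin p → ℝ) (W : Ω → ℝ) (ψ : Fin p → Ω → ι → ℝ)
    (hInt : ∀ v : ι → ℝ,
      Integrable (fun ω => W ω * ∑ ℓ, (c ω ℓ - ∑ k, v k * ψ ℓ ω k) ^ 2) F)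
    (v : ι → ℝ) :
    Integrable (fun ω => W ω * ∑ ℓ, (∑ k, v k * ψ ℓ ω k) ^ 2) F := by
  have h := (((hInt v).add (hInt (-v))).sub ((hInt 0).const_mul 2)).div_const 2
  refine h.congr (Filter.Eventually.of_forall fun ω => ?_)
  simp only [Pi.add_apply, Pi.sub_apply, Pi.neg_apply, neg_mul, Finset.sum_neg_distrib,
    Pi.zero_apply, zero_mul, Finset.sum_const_zero, sub_zero, sub_neg_eq_add]
  rw [div_eq_iff (two_ne_zero)]
  have := wsum_comb Finset.univ (W ω) 2 1 1 (-2)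
    (fun ℓ => (∑ k, v k * ψ ℓ ω k) ^ 2)
    (fun ℓ => (c ω ℓ - ∑ k, v k * ψ ℓ ω k) ^ 2)
    (fun ℓ => (c ω ℓ + ∑ k, v k * ψ ℓ ω k) ^ 2)
    (fun ℓ => c ω ℓ ^ 2)
    (fun ℓ _ => by ring)
  linarith

private lemma existsUnique_quad_min {Ω : Type*} [MeasurableSpace Ω]
    {ι : Type*} [Fintype ι] [DecidableEq ι] {p : ℕ}
    (F : Measure Ω) (c : Ω → Fin p → ℝ) (W : Ω → ℝ) (ψ : Fin p → Ω → ι → ℝ)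
    (hInt : ∀ v : ι → ℝ,
      Integrable (fun ω => W ω * ∑ ℓ, (c ω ℓ - ∑ k, v k * ψ ℓ ω k) ^ 2) F)
    (hpos : ∀ v : ι → ℝ, v ≠ 0 →
      0 < ∫ ω, W ω * ∑ ℓ, (∑ k, v k * ψ ℓ ω k) ^ 2 ∂F) :
    ∃! v : ι → ℝ, ∀ v' : ι → ℝ,
      (∫ ω, W ω * ∑ ℓ, (c ω ℓ - ∑ k, v k * ψ ℓ ω k) ^ 2 ∂F)
        ≤ ∫ ω, W ω * ∑ ℓ, (c ω ℓ - ∑ k, v' k * ψ ℓ ω k) ^ 2 ∂F := by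
  classical
  set R : (ι → ℝ) → Ω → ℝ :=
    fun v ω => W ω * ∑ ℓ, (c ω ℓ - ∑ k, v k * ψ ℓ ω k) ^ 2 with hRdef
  set Qf : (ι → ℝ) → Ω → ℝ :=
    fun v ω => W ω * ∑ ℓ, (∑ k, v k * ψ ℓ ω k) ^ 2 with hQdef
  set Lf : (ι → ℝ) → Ω → ℝ :=
    fun v ω => W ω * ∑ ℓ, c ω ℓ * (∑ k, v k * ψ ℓ ω k) with hLdef
  set Bf : (ι → ℝ) → (ι → ℝ) → Ω → ℝ :=
    fun u v ω => W ω * ∑ ℓ, (∑ k, u k * ψ ℓ ω k) * (∑ k, v k * ψ ℓ ω k) with hBdef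
  set e : ι → ι → ℝ := fun k => Pi.single k 1 with hedef
  -- pointwise identities
  have hQR : ∀ (v : ι → ℝ) ω, Qf v ω = (R v ω + R (-v) ω - 2 * R 0 ω) / 2 := by
    intro v ω
    simp only [hRdef, hQdef, Pi.neg_apply, neg_mul, Finset.sum_neg_distrib,
      Pi.zero_apply, zero_mul, Finset.sum_const_zero, sub_zero, sub_neg_eq_add]
    rw [eq_div_iff (two_ne_zero)]
    have := wsum_comb Finset.univ (W ω) 2 1 1 (-2)
      (fun ℓ => (∑ k, v k * ψ ℓ ω k) ^ 2)
      (fun ℓ => (c ω ℓ - ∑ k, v k * ψ ℓ ω k) ^ 2)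
      (fun ℓ => (c ω ℓ + ∑ k, v k * ψ ℓ ω k) ^ 2)
      (fun ℓ => c ω ℓ ^ 2)
      (fun ℓ _ => by ring)
    linarith
  have hBQ : ∀ (u v : ι → ℝ) ω, Bf u v ω = (Qf (u + v) ω - Qf (u - v) ω) / 4 := by
    intro u v ω
    simp only [hQdef, hBdef, Pi.add_apply, Pi.sub_apply, add_mul, sub_mul,
      Finset.sum_add_distrib, Finset.sum_sub_distrib]
    rw [eq_comm, div_eq_iff (by norm_num : (4:ℝ) ≠ 0), eq_comm]
    have := wsum_comb Finset.univ (W ω) 4 1 (-1) 0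
      (fun ℓ => (∑ k, u k * ψ ℓ ω k) * (∑ k, v k * ψ ℓ ω k))
      (fun ℓ => ((∑ k, u k * ψ ℓ ω k) + ∑ k, v k * ψ ℓ ω k) ^ 2)
      (fun ℓ => ((∑ k, u k * ψ ℓ ω k) - ∑ k, v k * ψ ℓ ω k) ^ 2)
      (fun ℓ => (0:ℝ))
      (fun ℓ _ => by ring)
    simp only [Finset.sum_const_zero] at this
    linarith
  have hRdec : ∀ (v : ι → ℝ) ω, R v ω = R 0 ω - 2 * Lf v ω + Qf v ω := by
    intro v ω
    simp only [hRdef, hQdef, hLdef, Pi.zero_apply, zero_mul, Finset.sum_const_zero,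
      sub_zero]
    have := wsum_comb Finset.univ (W ω) 1 1 (-2) 1
      (fun ℓ => (c ω ℓ - ∑ k, v k * ψ ℓ ω k) ^ 2)
      (fun ℓ => c ω ℓ ^ 2)
      (fun ℓ => c ω ℓ * (∑ k, v k * ψ ℓ ω k))
      (fun ℓ => (∑ k, v k * ψ ℓ ω k) ^ 2)
      (fun ℓ _ => by ring)
    linarith
  -- integrability
  have IQ : ∀ v : ι → ℝ, Integrable (Qf v) F := by
    intro v
    have h := (((hInt v).add (hInt (-v))).sub ((hInt 0).const_mul 2)).div_const 2
    exact h.congr (Filter.Eventually.of_forall fun ω => (hQR v ω).symm)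
  have IB : ∀ u v : ι → ℝ, Integrable (Bf u v) F := by
    intro u v
    have h := ((IQ (u + v)).sub (IQ (u - v))).div_const 4
    exact h.congr (Filter.Eventually.of_forall fun ω => (hBQ u v ω).symm)
  have IL : ∀ v : ι → ℝ, Integrable (Lf v) F := by
    intro v
    have hLf' : ∀ ω, Lf v ω = (R 0 ω - R v ω + Qf v ω) / 2 := by
      intro ω; have := hRdec v ω; linarith
    have h := (((hInt 0).sub (hInt v)).add (IQ v)).div_const 2
    exact h.congr (Filter.Eventually.of_forall fun ω => (hLf' ω).symm)
  -- single-vector expansions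
  have hsingle : ∀ (k : ι) ℓ ω, (∑ k', e k k' * ψ ℓ ω k') = ψ ℓ ω k := by
    intro k ℓ ω
    simp [hedef, Pi.single_apply, ite_mul]
  have hBdouble : ∀ (u v : ι → ℝ) ω,
      Bf u v ω = ∑ k, ∑ k', u k * v k' * Bf (e k) (e k') ω := by
    intro u v ω
    simp only [hBdef, hsingle]
    calc W ω * ∑ ℓ, (∑ k, u k * ψ ℓ ω k) * (∑ k', v k' * ψ ℓ ω k')
        = ∑ ℓ, ∑ k, ∑ k', W ω * (u k * ψ ℓ ω k * (v k' * ψ ℓ ω k'))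
          := by
            rw [Finset.mul_sum]
            refine Finset.sum_congr rfl fun ℓ _ => ?_
            rw [Finset.sum_mul_sum, Finset.mul_sum]
            exact Finset.sum_congr rfl fun k _ => by rw [Finset.mul_sum]
      _ = ∑ k, ∑ ℓ, ∑ k', W ω * (u k * ψ ℓ ω k * (v k' * ψ ℓ ω k')) := Finset.sum_comm
      _ = ∑ k, ∑ k', ∑ ℓ, W ω * (u k * ψ ℓ ω k * (v k' * ψ ℓ ω k'))
          := Finset.sum_congr rfl fun k _ => Finset.sum_comm
      _ = ∑ k, ∑ k', u k * v k' * (W ω * ∑ ℓ, ψ ℓ ω k * ψ ℓ ω k') := by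
          refine Finset.sum_congr rfl fun k _ => Finset.sum_congr rfl fun k' _ => ?_
          rw [Finset.mul_sum, Finset.mul_sum]
          exact Finset.sum_congr rfl fun ℓ _ => by ring
  have hLdouble : ∀ (v : ι → ℝ) ω,
      Lf v ω = ∑ k, v k * Lf (e k) ω := by
    intro v ω
    simp only [hLdef, hsingle]
    calc W ω * ∑ ℓ, c ω ℓ * ∑ k, v k * ψ ℓ ω k
        = ∑ ℓ, ∑ k, W ω * (c ω ℓ * (v k * ψ ℓ ω k)) := by
          rw [Finset.mul_sum]
          refine Finset.sum_congr rfl fun ℓ _ => ?_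
          rw [Finset.mul_sum, Finset.mul_sum]
      _ = ∑ k, ∑ ℓ, W ω * (c ω ℓ * (v k * ψ ℓ ω k)) := Finset.sum_comm
      _ = ∑ k, v k * (W ω * ∑ ℓ, c ω ℓ * ψ ℓ ω k) := by
          refine Finset.sum_congr rfl fun k _ => ?_
          rw [Finset.mul_sum, Finset.mul_sum]
          exact Finset.sum_congr rfl fun ℓ _ => by ring
  -- the Gram matrix and linear term
  set A : Matrix ι ι ℝ :=
    Matrix.of fun k k' => ∫ ω, Bf (e k) (e k') ω ∂F with hAdef
  set m : ι → ℝ := fun k => ∫ ω, Lf (e k) ω ∂F with hmdef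
  have hQB : ∀ (v : ι → ℝ) ω, Qf v ω = Bf v v ω := by
    intro v ω
    simp only [hQdef, hBdef]
    congr 1
    exact Finset.sum_congr rfl fun ℓ _ => by ring
  have hintB : ∀ u v : ι → ℝ, (∫ ω, Bf u v ω ∂F) = u ⬝ᵥ A *ᵥ v := by
    intro u v
    rw [dot_expand]
    rw [integral_congr_ae (Filter.Eventually.of_forall (hBdouble u v))]
    rw [integral_finset_sum _ (fun k _ =>
      integrable_finset_sum _ fun k' _ => (IB _ _).const_mul _)]
    refine Finset.sum_congr rfl fun k _ => ?_
    rw [integral_finset_sum _ (fun k' _ => ((IB _ _).const_mul _))]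
    exact Finset.sum_congr rfl fun k' _ => by
      rw [integral_const_mul]; rfl
  have hintQ : ∀ v : ι → ℝ, (∫ ω, Qf v ω ∂F) = v ⬝ᵥ A *ᵥ v := by
    intro v
    rw [integral_congr_ae (Filter.Eventually.of_forall (hQB v)), hintB]
  have hintL : ∀ v : ι → ℝ, (∫ ω, Lf v ω ∂F) = v ⬝ᵥ m := by
    intro v
    rw [integral_congr_ae (Filter.Eventually.of_forall (hLdouble v)),
      integral_finset_sum _ (fun k _ => (IL _).const_mul _)]
    exact Finset.sum_congr rfl fun k _ => by rw [integral_const_mul]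
  have hJ : ∀ v : ι → ℝ,
      (∫ ω, R v ω ∂F) = (∫ ω, R 0 ω ∂F) - 2 * (v ⬝ᵥ m) + v ⬝ᵥ A *ᵥ v := by
    intro v
    have i0 : Integrable (R 0) F := hInt 0
    have i2 : Integrable (fun ω => 2 * Lf v ω) F := (IL v).const_mul 2
    have i1 : Integrable (fun ω => R 0 ω - 2 * Lf v ω) F := i0.sub i2
    rw [integral_congr_ae (Filter.Eventually.of_forall (hRdec v))]
    rw [integral_add i1 (IQ v), integral_sub i0 i2, integral_const_mul, hintL, hintQ]
  -- positivity of A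
  have hApos : ∀ v : ι → ℝ, v ≠ 0 → 0 < v ⬝ᵥ A *ᵥ v := by
    intro v hv
    rw [← hintQ]
    exact hpos v hv
  have hAnonneg : ∀ v : ι → ℝ, 0 ≤ v ⬝ᵥ A *ᵥ v := by
    intro v
    by_cases hv : v = 0
    · simp [hv]
    · exact (hApos v hv).le
  have hsymA : ∀ k k', A k k' = A k' k := by
    intro k k'
    simp only [hAdef, Matrix.of_apply]
    refine integral_congr_ae (Filter.Eventually.of_forall fun ω => ?_)
    simp only [hBdef]
    congr 1
    exact Finset.sum_congr rfl fun ℓ _ => by ring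
  have hsymdot : ∀ u v : ι → ℝ, u ⬝ᵥ A *ᵥ v = v ⬝ᵥ A *ᵥ u := by
    intro u v
    rw [dot_expand, dot_expand, Finset.sum_comm]
    refine Finset.sum_congr rfl fun k _ => Finset.sum_congr rfl fun k' _ => ?_
    rw [hsymA k' k]; ring
  have hAunit : IsUnit A := by
    have hpd : A.PosDef := by
      refine Matrix.PosDef.of_dotProduct_mulVec_pos ?_ fun x hx => ?_
      · ext i j
        simpa using hsymA j i
      · simpa using hApos x hx
    exact hpd.isUnit
  set vs : ι → ℝ := A⁻¹ *ᵥ m with hvs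
  have hAvs : A *ᵥ vs = m := by
    rw [hvs, Matrix.mulVec_mulVec,
      Matrix.mul_nonsing_inv _ ((Matrix.isUnit_iff_isUnit_det _).mp hAunit),
      Matrix.one_mulVec]
  have hkey : ∀ v : ι → ℝ,
      (∫ ω, R v ω ∂F) = (∫ ω, R vs ω ∂F) + (v - vs) ⬝ᵥ A *ᵥ (v - vs) := by
    intro v
    rw [hJ v, hJ vs, Matrix.mulVec_sub, dotProduct_sub, sub_dotProduct, sub_dotProduct]
    have h1 : vs ⬝ᵥ A *ᵥ v = v ⬝ᵥ A *ᵥ vs := hsymdot vs v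
    have h2 : v ⬝ᵥ A *ᵥ vs = v ⬝ᵥ m := by rw [hAvs]
    have h3 : vs ⬝ᵥ A *ᵥ vs = vs ⬝ᵥ m := by rw [hAvs]
    linarith
  refine ⟨vs, fun v' => ?_, fun y hy => ?_⟩
  · rw [hkey v']
    exact le_add_of_nonneg_right (hAnonneg _)
  · by_contra hne
    have hd : y - vs ≠ 0 := sub_ne_zero.mpr hne
    have h1 := hy vs
    rw [hkey y] at h1
    have h2 := hApos _ hd
    linarith

private lemma compProd_withDensity_left {α β : Type*} [MeasurableSpace α] [MeasurableSpace β]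
    (μ : Measure α) [SFinite μ] (ρ : α → ℝ≥0∞) (hρ : Measurable ρ)
    (κ : Kernel α β) [IsSFiniteKernel κ] :
    (μ.withDensity ρ) ⊗ₘ κ = (μ ⊗ₘ κ).withDensity (fun z => ρ z.1) := by
  ext s hs
  rw [Measure.compProd_apply hs, withDensity_apply _ hs,
    lintegral_withDensity_eq_lintegral_mul _ hρ
      (Kernel.measurable_kernel_prodMk_left hs)]
  have hm : Measurable (s.indicator (fun z : α × β => ρ z.1)) :=
    (hρ.comp measurable_fst).indicator hs
  rw [← lintegral_indicator hs, Measure.lintegral_compProd hm]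
  refine lintegral_congr fun x => ?_
  have : ∀ y : β, s.indicator (fun z : α × β => ρ z.1) (x, y)
      = (Prod.mk x ⁻¹' s).indicator (fun _ => ρ x) y := by
    intro y
    by_cases h : (x, y) ∈ s <;> simp [Set.indicator_apply, h]
  simp only [this]
  rw [lintegral_indicator (measurable_prodMk_left hs), setLIntegral_const]
  rfl

private lemma prod_withDensity_left {α β : Type*} [MeasurableSpace α] [MeasurableSpace β]
    (μ : Measure α) [SFinite μ] (ν : Measure β) [SFinite ν]
    (ρ : α → ℝ≥0∞) (hρ : Measurable ρ) :
    (μ.withDensity ρ).prod ν = (μ.prod ν).withDensity (fun z => ρ z.1) := by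
  rw [← Measure.compProd_const, ← Measure.compProd_const,
    compProd_withDensity_left μ ρ hρ]

/-- The weighted population least-squares objective
`E_F[W · Σ_ℓ (Y_ℓ − θᵀ(T−c) f_ℓ(X) − βᵀ g_ℓ(X))²]`. -/
noncomputable def wlsObj {Ω 𝒳 : Type*} [MeasurableSpace Ω]
    {p a b : ℕ} (F : Measure Ω) (X : Ω → 𝒳) (T : Ω → ℝ) (Y : Ω → Fin p → ℝ)
    (f : Fin p → 𝒳 → Fin a → ℝ) (g : Fin p → 𝒳 → Fin b → ℝ)
    (W : Ω → ℝ) (c : ℝ) (θβ : (Fin a → ℝ) × (Fin b → ℝ)) : ℝ :=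
  ∫ ω, W ω * ∑ ℓ, (Y ω ℓ - (∑ i, θβ.1 i * ((T ω - c) * f ℓ (X ω) i))
      - ∑ j, θβ.2 j * g ℓ (X ω) j) ^ 2 ∂F

set_option maxHeartbeats 2000000 in
/-- weighting by the true covariate density ratio identifies the
transported coefficient.  With `κ` a regular conditional distribution of `Y`
given `(X,T)` under `Q`, and `F* = (P_X × Bernoulli(π)) ⊗ₘ κ` the transported
distribution, the θ-component of the unique minimizer of the `w`-weighted
least-squares objective under `Q` equals the θ-component of the unique
minimizer of the unweighted objective under `F*`. -/
theorem statement12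
    {Ω 𝒳 : Type*} [MeasurableSpace Ω] [MeasurableSpace 𝒳] [StandardBorelSpace 𝒳]
    {p a b : ℕ}
    (P Q : Measure Ω) [IsProbabilityMeasure P] [IsProbabilityMeasure Q]
    (X : Ω → 𝒳) (T : Ω → ℝ) (Y : Ω → Fin p → ℝ)
    (f : Fin p → 𝒳 → Fin a → ℝ) (g : Fin p → 𝒳 → Fin b → ℝ)
    (hX : Measurable X) (hT : Measurable T) (hY : Measurable Y)
    (hf : ∀ ℓ, Measurable (f ℓ)) (hg : ∀ ℓ, Measurable (g ℓ))
    (π : ℝ) (hπ0 : 0 < π) (hπ1 : π < 1)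
    (hT01 : ∀ ω, T ω = 0 ∨ T ω = 1)
    (hTπQ : Q {ω | T ω = 1} = ENNReal.ofReal π)
    (hindepQ : IndepFun T X Q)
    (hY2 : ∀ ℓ, MemLp (fun ω => Y ω ℓ) 2 Q)
    -- w is a version of the density ratio dP_X/dQ_X
    (w : 𝒳 → ℝ) (hwm : Measurable w) (hw0 : ∀ x, 0 ≤ w x)
    (habs : P.map X ≪ Q.map X)
    (hdens : P.map X = (Q.map X).withDensity (fun x => ENNReal.ofReal (w x)))
    -- κ is a regular conditional distribution of Y given (X,T) under Q
    (κ : ProbabilityTheory.Kernel (𝒳 × ℝ) (Fin p → ℝ)) [IsMarkovKernel κ]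
    (hκ : Q.map (fun ω => ((X ω, T ω), Y ω))
      = (Q.map (fun ω => (X ω, T ω))) ⊗ₘ κ)
    -- invertibility of the Gram matrices under P
    (hMinv : IsUnit (Matrix.of fun i j : Fin a =>
      ∑ ℓ, ∫ ω, f ℓ (X ω) i * f ℓ (X ω) j ∂P))
    (hGinv : IsUnit (Matrix.of fun i j : Fin b =>
      ∑ ℓ, ∫ ω, g ℓ (X ω) i * g ℓ (X ω) j ∂P))
    -- all displayed integrals are finite
    (hobjIntQ : ∀ θβ : (Fin a → ℝ) × (Fin b → ℝ),
      Integrable (fun ω => w (X ω) * ∑ ℓ, (Y ω ℓ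
        - (∑ i, θβ.1 i * ((T ω - π) * f ℓ (X ω) i))
        - ∑ j, θβ.2 j * g ℓ (X ω) j) ^ 2) Q)
    (hobjIntF : ∀ θβ : (Fin a → ℝ) × (Fin b → ℝ),
      Integrable (fun z : (𝒳 × ℝ) × (Fin p → ℝ) => ∑ ℓ, (z.2 ℓ
        - (∑ i, θβ.1 i * ((z.1.2 - π) * f ℓ z.1.1 i))
        - ∑ j, θβ.2 j * g ℓ z.1.1 j) ^ 2)
        (((P.map X).prod
          ((ENNReal.ofReal π) • Measure.dirac (1 : ℝ)
            + (ENNReal.ofReal (1 - π)) • Measure.dirac (0 : ℝ))) ⊗ₘ κ))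
    (hMIntP : ∀ ℓ, ∀ i j : Fin a, Integrable (fun ω => f ℓ (X ω) i * f ℓ (X ω) j) P)
    (hGIntP : ∀ ℓ, ∀ i j : Fin b, Integrable (fun ω => g ℓ (X ω) i * g ℓ (X ω) j) P) :
    (∃! θβ : (Fin a → ℝ) × (Fin b → ℝ),
      ∀ θβ', wlsObj Q X T Y f g (fun ω => w (X ω)) π θβ
        ≤ wlsObj Q X T Y f g (fun ω => w (X ω)) π θβ') ∧
    (∃! θβ : (Fin a → ℝ) × (Fin b → ℝ),
      ∀ θβ', wlsObj
          ((((P.map X).prod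
            ((ENNReal.ofReal π) • Measure.dirac (1 : ℝ)
              + (ENNReal.ofReal (1 - π)) • Measure.dirac (0 : ℝ))) ⊗ₘ κ))
          (fun z => z.1.1) (fun z => z.1.2) (fun z => z.2) f g (fun _ => 1) π θβ
        ≤ wlsObj
          ((((P.map X).prod
            ((ENNReal.ofReal π) • Measure.dirac (1 : ℝ)
              + (ENNReal.ofReal (1 - π)) • Measure.dirac (0 : ℝ))) ⊗ₘ κ))
          (fun z => z.1.1) (fun z => z.1.2) (fun z => z.2) f g (fun _ => 1) π θβ') ∧
    (∀ θβ θβ' : (Fin a → ℝ) × (Fin b → ℝ),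
      (∀ q, wlsObj Q X T Y f g (fun ω => w (X ω)) π θβ
        ≤ wlsObj Q X T Y f g (fun ω => w (X ω)) π q) →
      (∀ q, wlsObj
          ((((P.map X).prod
            ((ENNReal.ofReal π) • Measure.dirac (1 : ℝ)
              + (ENNReal.ofReal (1 - π)) • Measure.dirac (0 : ℝ))) ⊗ₘ κ))
          (fun z => z.1.1) (fun z => z.1.2) (fun z => z.2) f g (fun _ => 1) π θβ'
        ≤ wlsObj
          ((((P.map X).prod
            ((ENNReal.ofReal π) • Measure.dirac (1 : ℝ)
              + (ENNReal.ofReal (1 - π)) • Measure.dirac (0 : ℝ))) ⊗ₘ κ))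
          (fun z => z.1.1) (fun z => z.1.2) (fun z => z.2) f g (fun _ => 1) π q) →
      θβ.1 = θβ'.1) := by
  classical
  set D : Measure ℝ := (ENNReal.ofReal π) • Measure.dirac (1 : ℝ)
      + (ENNReal.ofReal (1 - π)) • Measure.dirac (0 : ℝ) with hD
  have hπsum : ENNReal.ofReal π + ENNReal.ofReal (1 - π) = 1 := by
    rw [← ENNReal.ofReal_add hπ0.le (by linarith)]
    norm_num
  have hDprob : IsProbabilityMeasure D := by
    constructor
    simp only [hD, Measure.add_apply, Measure.smul_apply, smul_eq_mul, measure_univ,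
      mul_one]
    exact hπsum
  haveI := hDprob
  haveI : IsProbabilityMeasure (Q.map X) := Measure.isProbabilityMeasure_map hX.aemeasurable
  haveI : IsProbabilityMeasure (P.map X) := Measure.isProbabilityMeasure_map hX.aemeasurable
  -- the law of T under Q
  have hsetT1 : MeasurableSet {ω | T ω = 1} := hT (measurableSet_singleton 1)
  have hT0compl : {ω | T ω = 0} = {ω | T ω = 1}ᶜ := by
    ext ω; rcases hT01 ω with h | h <;> simp [h]
  have hQT0 : Q {ω | T ω = 0} = ENNReal.ofReal (1 - π) := by
    rw [hT0compl, measure_compl hsetT1 (measure_ne_top Q _), hTπQ, measure_univ]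
    rw [← ENNReal.ofReal_one, ← ENNReal.ofReal_sub _ hπ0.le]
  have hmapT : Q.map T = D := by
    ext s hs
    rw [Measure.map_apply hT hs, hD]
    simp only [Measure.add_apply, Measure.smul_apply, smul_eq_mul,
      Measure.dirac_apply' _ hs]
    by_cases h1 : (1:ℝ) ∈ s <;> by_cases h0 : (0:ℝ) ∈ s
    · have hpre : T ⁻¹' s = Set.univ := by
        ext ω; simp only [Set.mem_preimage, Set.mem_univ, iff_true]
        rcases hT01 ω with h | h
        · rw [h]; exact h0
        · rw [h]; exact h1
      rw [hpre, measure_univ]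
      simp [Set.indicator_of_mem, h0, h1]
      exact hπsum.symm
    · have hpre : T ⁻¹' s = {ω | T ω = 1} := by
        ext ω; simp only [Set.mem_preimage, Set.mem_setOf_eq]
        rcases hT01 ω with h | h
        · rw [h]; constructor
          · intro hh; exact absurd hh h0
          · intro hh; norm_num at hh
        · rw [h]; constructor
          · intro _; rfl
          · intro _; exact h1
      rw [hpre, hTπQ]
      simp [Set.indicator_of_mem, Set.indicator_of_notMem, h0, h1]
    · have hpre : T ⁻¹' s = {ω | T ω = 0} := by
        ext ω; simp only [Set.mem_preimage, Set.mem_setOf_eq]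
        rcases hT01 ω with h | h
        · rw [h]; constructor
          · intro _; rfl
          · intro _; exact h0
        · rw [h]; constructor
          · intro hh; exact absurd hh h1
          · intro hh; norm_num at hh
      rw [hpre, hQT0]
      simp [Set.indicator_of_mem, Set.indicator_of_notMem, h0, h1]
    · have hpre : T ⁻¹' s = ∅ := by
        ext ω; simp only [Set.mem_preimage, Set.mem_empty_iff_false, iff_false]
        rcases hT01 ω with h | h
        · rw [h]; exact h0
        · rw [h]; exact h1
      rw [hpre]
      simp [Set.indicator_of_notMem, h0, h1]
  -- joint law of (X, T) under Q
  have hmapXT : Q.map (fun ω => (X ω, T ω)) = (Q.map X).prod D := by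
    have h := (indepFun_iff_map_prod_eq_prod_map_map hX.aemeasurable hT.aemeasurable).mp
      hindepQ.symm
    rw [h, hmapT]
  -- the transported measure as a density against the Q-law of ((X,T),Y)
  have hFstar : ((P.map X).prod D) ⊗ₘ κ
      = (Q.map (fun ω => ((X ω, T ω), Y ω))).withDensity
          (fun z => ENNReal.ofReal (w z.1.1)) := by
    have hρ2 : Measurable (fun z : 𝒳 × ℝ => ENNReal.ofReal (w z.1)) :=
      hwm.ennreal_ofReal.comp measurable_fst
    rw [hdens, prod_withDensity_left _ D _ hwm.ennreal_ofReal,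
      compProd_withDensity_left ((Q.map X).prod D) _ hρ2 κ,
      ← hmapXT, ← hκ]
  -- measurability of the objective integrand
  have hbodymeas : ∀ θβ : (Fin a → ℝ) × (Fin b → ℝ),
      Measurable (fun z : (𝒳 × ℝ) × (Fin p → ℝ) => ∑ ℓ, (z.2 ℓ
        - (∑ i, θβ.1 i * ((z.1.2 - π) * f ℓ z.1.1 i))
        - ∑ j, θβ.2 j * g ℓ z.1.1 j) ^ 2) := by
    intro θβ
    refine Finset.measurable_sum _ fun ℓ _ => ?_
    have h2 : Measurable fun z : (𝒳 × ℝ) × (Fin p → ℝ) => z.2 ℓ :=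
      (measurable_pi_apply ℓ).comp measurable_snd
    have hfm : Measurable fun z : (𝒳 × ℝ) × (Fin p → ℝ) =>
        (∑ i, θβ.1 i * ((z.1.2 - π) * f ℓ z.1.1 i)) := by
      refine Finset.measurable_sum _ fun i _ => ?_
      exact (((measurable_snd.comp measurable_fst).sub measurable_const).mul
        ((measurable_pi_apply i).comp ((hf ℓ).comp
          (measurable_fst.comp measurable_fst)))).const_mul _
    have hgm : Measurable fun z : (𝒳 × ℝ) × (Fin p → ℝ) =>
        (∑ j, θβ.2 j * g ℓ z.1.1 j) := by
      refine Finset.measurable_sum _ fun j _ => ?_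
      exact ((measurable_pi_apply j).comp ((hg ℓ).comp
        (measurable_fst.comp measurable_fst))).const_mul _
    exact ((h2.sub hfm).sub hgm).pow_const 2
  -- equality of the two objectives
  have objEq : ∀ θβ : (Fin a → ℝ) × (Fin b → ℝ),
      wlsObj (((P.map X).prod D) ⊗ₘ κ)
        (fun z => z.1.1) (fun z => z.1.2) (fun z => z.2) f g (fun _ => 1) π θβ
      = wlsObj Q X T Y f g (fun ω => w (X ω)) π θβ := by
    intro θβ
    simp only [wlsObj, one_mul]
    rw [hFstar]
    have hwnn : Measurable fun z : (𝒳 × ℝ) × (Fin p → ℝ) => (w z.1.1).toNNReal :=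
      (hwm.comp (measurable_fst.comp measurable_fst)).real_toNNReal
    have hdid : (fun z : (𝒳 × ℝ) × (Fin p → ℝ) => ENNReal.ofReal (w z.1.1))
        = fun z : (𝒳 × ℝ) × (Fin p → ℝ) => ((w z.1.1).toNNReal : ℝ≥0∞) := rfl
    rw [hdid, integral_withDensity_eq_integral_smul hwnn]
    have htriple : AEMeasurable (fun ω => ((X ω, T ω), Y ω)) Q :=
      ((hX.prodMk hT).prodMk hY).aemeasurable
    have hintm : AEStronglyMeasurable (fun z : (𝒳 × ℝ) × (Fin p → ℝ) =>
        w z.1.1 * ∑ ℓ, (z.2 ℓ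
        - (∑ i, θβ.1 i * ((z.1.2 - π) * f ℓ z.1.1 i))
        - ∑ j, θβ.2 j * g ℓ z.1.1 j) ^ 2)
        (Q.map (fun ω => ((X ω, T ω), Y ω))) :=
      ((hwm.comp (measurable_fst.comp measurable_fst)).mul
        (hbodymeas θβ)).aestronglyMeasurable
    refine Eq.trans (integral_congr_ae (Filter.Eventually.of_forall fun z => ?_))
      (integral_map htriple hintm)
    simp only [NNReal.smul_def, Real.coe_toNNReal _ (hw0 _), smul_eq_mul]
  -- the Q-side features
  set ψ : Fin p → Ω → (Fin a ⊕ Fin b) → ℝ := fun ℓ ω =>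
    Sum.elim (fun i => (T ω - π) * f ℓ (X ω) i) (fun j => g ℓ (X ω) j) with hψ
  have hmatch : ∀ (u : (Fin a ⊕ Fin b) → ℝ) (ℓ : Fin p) (ω : Ω),
      (∑ k, u k * ψ ℓ ω k)
        = (T ω - π) * (∑ i, u (Sum.inl i) * f ℓ (X ω) i)
          + ∑ j, u (Sum.inr j) * g ℓ (X ω) j := by
    intro u ℓ ω
    rw [Fintype.sum_sum_type]
    simp only [hψ, Sum.elim_inl, Sum.elim_inr]
    rw [Finset.mul_sum]
    congr 1
    exact Finset.sum_congr rfl fun i _ => by ring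
  have hobj : ∀ (θβ : (Fin a → ℝ) × (Fin b → ℝ)) (ω : Ω),
      w (X ω) * ∑ ℓ, (Y ω ℓ - (∑ i, θβ.1 i * ((T ω - π) * f ℓ (X ω) i))
          - ∑ j, θβ.2 j * g ℓ (X ω) j) ^ 2
        = w (X ω) * ∑ ℓ, (Y ω ℓ - ∑ k, (Sum.elim θβ.1 θβ.2) k * ψ ℓ ω k) ^ 2 := by
    intro θβ ω
    congr 1
    refine Finset.sum_congr rfl fun ℓ _ => ?_
    rw [hmatch (Sum.elim θβ.1 θβ.2) ℓ ω]
    simp only [Sum.elim_inl, Sum.elim_inr]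
    have hs : ∑ i, θβ.1 i * ((T ω - π) * f ℓ (X ω) i)
        = (T ω - π) * ∑ i, θβ.1 i * f ℓ (X ω) i := by
      rw [Finset.mul_sum]
      exact Finset.sum_congr rfl fun i _ => by ring
    rw [hs]
    ring
  have hIntψ : ∀ v : (Fin a ⊕ Fin b) → ℝ,
      Integrable (fun ω => w (X ω) * ∑ ℓ, (Y ω ℓ - ∑ k, v k * ψ ℓ ω k) ^ 2) Q := by
    intro v
    refine (hobjIntQ (v ∘ Sum.inl, v ∘ Sum.inr)).congr
      (Filter.Eventually.of_forall fun ω => ?_)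
    have h := hobj (v ∘ Sum.inl, v ∘ Sum.inr) ω
    rwa [Sum.elim_comp_inl_inr] at h
  -- measurability helpers
  have hUmeas : ∀ (x' : Fin a → ℝ) (ℓ : Fin p),
      Measurable (fun y : 𝒳 => ∑ i, x' i * f ℓ y i) := by
    intro x' ℓ
    exact Finset.measurable_sum _ fun i _ =>
      ((measurable_pi_apply i).comp (hf ℓ)).const_mul _
  have hSmeas : ∀ (x' : Fin b → ℝ) (ℓ : Fin p),
      Measurable (fun y : 𝒳 => ∑ j, x' j * g ℓ y j) := by
    intro x' ℓ
    exact Finset.measurable_sum _ fun j _ =>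
      ((measurable_pi_apply j).comp (hg ℓ)).const_mul _
  -- moments of T − π
  have hTabs : ∀ ω, |T ω - π| ≤ 1 := by
    intro ω; rcases hT01 ω with h | h <;> rw [h, abs_le] <;> constructor <;> linarith
  have hTi : Integrable T Q := by
    refine Integrable.mono' (integrable_const 1) hT.aestronglyMeasurable
      (Filter.Eventually.of_forall fun ω => ?_)
    rcases hT01 ω with h | h <;> rw [h] <;> simp
  have hTmean : ∫ ω, T ω ∂Q = π := by
    have hTind : (fun ω => T ω) = Set.indicator {ω | T ω = 1} (fun _ => (1:ℝ)) := by
      funext ω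
      rcases hT01 ω with h | h <;> simp [Set.indicator_apply, h]
    rw [hTind, integral_indicator_const (1:ℝ) hsetT1, measureReal_def, hTπQ, smul_eq_mul, mul_one,
      ENNReal.toReal_ofReal hπ0.le]
  have hTm1 : ∫ ω, (T ω - π) ∂Q = 0 := by
    rw [integral_sub hTi (integrable_const π), hTmean, integral_const]
    simp
  have hTm2 : ∫ ω, (T ω - π) ^ 2 ∂Q = π * (1 - π) := by
    have hid : (fun ω => (T ω - π) ^ 2) = fun ω => (1 - 2 * π) * T ω + π ^ 2 := by
      funext ω; rcases hT01 ω with h | h <;> rw [h] <;> ring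
    rw [hid, integral_add (hTi.const_mul _) (integrable_const _), integral_const_mul,
      hTmean, integral_const]
    simp
    ring
  -- positivity of the quadratic form
  have hpos : ∀ v : (Fin a ⊕ Fin b) → ℝ, v ≠ 0 →
      0 < ∫ ω, w (X ω) * ∑ ℓ, (∑ k, v k * ψ ℓ ω k) ^ 2 ∂Q := by
    intro v hv
    set θ : Fin a → ℝ := v ∘ Sum.inl with hθ
    set β' : Fin b → ℝ := v ∘ Sum.inr with hβ'
    set U : Fin p → 𝒳 → ℝ := fun ℓ x => ∑ i, θ i * f ℓ x i with hU
    set S : Fin p → 𝒳 → ℝ := fun ℓ x => ∑ j, β' j * g ℓ x j with hS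
    set A1 : 𝒳 → ℝ := fun x => w x * ∑ ℓ, (U ℓ x) ^ 2 with hA1
    set A2 : 𝒳 → ℝ := fun x => w x * ∑ ℓ, 2 * (U ℓ x * S ℓ x) with hA2
    set A3 : 𝒳 → ℝ := fun x => w x * ∑ ℓ, (S ℓ x) ^ 2 with hA3
    have hA1m : Measurable A1 := by
      rw [hA1]
      exact hwm.mul (Finset.measurable_sum _ fun ℓ _ => (hUmeas θ ℓ).pow_const 2)
    have hA2m : Measurable A2 := by
      rw [hA2]
      exact hwm.mul (Finset.measurable_sum _ fun ℓ _ =>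
        (((hUmeas θ ℓ).mul (hSmeas β' ℓ)).const_mul 2))
    have hA3m : Measurable A3 := by
      rw [hA3]
      exact hwm.mul (Finset.measurable_sum _ fun ℓ _ => (hSmeas β' ℓ).pow_const 2)
    have hA1nn : ∀ x, 0 ≤ A1 x := fun x =>
      mul_nonneg (hw0 x) (Finset.sum_nonneg fun ℓ _ => sq_nonneg _)
    have hA3nn : ∀ x, 0 ≤ A3 x := fun x =>
      mul_nonneg (hw0 x) (Finset.sum_nonneg fun ℓ _ => sq_nonneg _)
    have hdecomp : ∀ ω, w (X ω) * ∑ ℓ, (∑ k, v k * ψ ℓ ω k) ^ 2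
        = (T ω - π) ^ 2 * A1 (X ω) + (T ω - π) * A2 (X ω) + A3 (X ω) := by
      intro ω
      simp only [hA1, hA2, hA3]
      have := wsum_comb Finset.univ (w (X ω)) 1 ((T ω - π) ^ 2) (T ω - π) 1
        (fun ℓ => (∑ k, v k * ψ ℓ ω k) ^ 2)
        (fun ℓ => (U ℓ (X ω)) ^ 2)
        (fun ℓ => 2 * (U ℓ (X ω) * S ℓ (X ω)))
        (fun ℓ => (S ℓ (X ω)) ^ 2)
        (fun ℓ _ => by simp only [hmatch v, hU, hS, hθ, hβ', Function.comp_apply]; ring)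
      linarith
    -- integrability of the pieces
    have Iq1 : Integrable (fun ω => (T ω - π) ^ 2 * A1 (X ω)) Q := by
      have h := integrable_qf Q (fun ω => Y ω) (fun ω => w (X ω)) ψ hIntψ
        (Sum.elim θ 0)
      refine h.congr (Filter.Eventually.of_forall fun ω => ?_)
      simp only [hA1]
      have := wsum_comb Finset.univ (w (X ω)) 1 ((T ω - π) ^ 2) 0 0
        (fun ℓ => (∑ k, Sum.elim θ (0 : Fin b → ℝ) k * ψ ℓ ω k) ^ 2)
        (fun ℓ => (U ℓ (X ω)) ^ 2)
        (fun ℓ => (0:ℝ)) (fun ℓ => (0:ℝ))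
        (fun ℓ _ => by
          simp only [hmatch (Sum.elim θ (0 : Fin b → ℝ)), Sum.elim_inl, Sum.elim_inr,
            Pi.zero_apply, zero_mul, Finset.sum_const_zero, add_zero, hU]
          ring)
      simp only [Finset.sum_const_zero, mul_zero, add_zero] at this
      linarith
    have I3 : Integrable (fun ω => A3 (X ω)) Q := by
      have h := integrable_qf Q (fun ω => Y ω) (fun ω => w (X ω)) ψ hIntψ
        (Sum.elim 0 β')
      refine h.congr (Filter.Eventually.of_forall fun ω => ?_)
      simp only [hA3]
      congr 1
      refine Finset.sum_congr rfl fun ℓ _ => ?_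
      rw [hmatch (Sum.elim (0 : Fin a → ℝ) β') ℓ ω]
      simp only [Sum.elim_inl, Sum.elim_inr, Pi.zero_apply, zero_mul,
        Finset.sum_const_zero, mul_zero, zero_add, hS]
    have hm0 : (0:ℝ) < min (π ^ 2) ((1 - π) ^ 2) :=
      lt_min (pow_pos hπ0 2) (pow_pos (by linarith) 2)
    have hTlow : ∀ ω, min (π ^ 2) ((1 - π) ^ 2) ≤ (T ω - π) ^ 2 := by
      intro ω; rcases hT01 ω with h | h <;> rw [h]
      · have : (0 - π) ^ 2 = π ^ 2 := by ring
        rw [this]; exact min_le_left _ _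
      · exact min_le_right _ _
    have I1 : Integrable (fun ω => A1 (X ω)) Q := by
      refine Integrable.mono' (Iq1.const_mul (min (π ^ 2) ((1 - π) ^ 2))⁻¹)
        (hA1m.comp hX).aestronglyMeasurable
        (Filter.Eventually.of_forall fun ω => ?_)
      rw [Real.norm_eq_abs, abs_of_nonneg (hA1nn _)]
      have h1 : min (π ^ 2) ((1 - π) ^ 2) * A1 (X ω) ≤ (T ω - π) ^ 2 * A1 (X ω) :=
        mul_le_mul_of_nonneg_right (hTlow ω) (hA1nn _)
      calc A1 (X ω) = (min (π ^ 2) ((1 - π) ^ 2))⁻¹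
            * (min (π ^ 2) ((1 - π) ^ 2) * A1 (X ω)) := by
            field_simp
        _ ≤ (min (π ^ 2) ((1 - π) ^ 2))⁻¹ * ((T ω - π) ^ 2 * A1 (X ω)) :=
            mul_le_mul_of_nonneg_left h1 (inv_nonneg.mpr hm0.le)
    have I2 : Integrable (fun ω => A2 (X ω)) Q := by
      refine Integrable.mono' (I1.add I3) (hA2m.comp hX).aestronglyMeasurable
        (Filter.Eventually.of_forall fun ω => ?_)
      rw [Real.norm_eq_abs, hA2, hA1, hA3]
      have habs2 : |∑ ℓ, 2 * (U ℓ (X ω) * S ℓ (X ω))|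
          ≤ ∑ ℓ, ((U ℓ (X ω)) ^ 2 + (S ℓ (X ω)) ^ 2) := by
        refine (Finset.abs_sum_le_sum_abs _ _).trans (Finset.sum_le_sum fun ℓ _ => ?_)
        rw [abs_le]
        constructor <;> nlinarith [sq_nonneg (U ℓ (X ω) - S ℓ (X ω)),
          sq_nonneg (U ℓ (X ω) + S ℓ (X ω))]
      rw [abs_mul, abs_of_nonneg (hw0 _)]
      calc w (X ω) * |∑ ℓ, 2 * (U ℓ (X ω) * S ℓ (X ω))|
          ≤ w (X ω) * ∑ ℓ, ((U ℓ (X ω)) ^ 2 + (S ℓ (X ω)) ^ 2) :=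
            mul_le_mul_of_nonneg_left habs2 (hw0 _)
        _ = w (X ω) * ∑ ℓ, (U ℓ (X ω)) ^ 2 + w (X ω) * ∑ ℓ, (S ℓ (X ω)) ^ 2 := by
            rw [Finset.sum_add_distrib]; ring
    have Iq2 : Integrable (fun ω => (T ω - π) * A2 (X ω)) Q := by
      refine Integrable.bdd_mul (c := 1) I2 ((hT.sub measurable_const)).aestronglyMeasurable
        (Filter.Eventually.of_forall fun ω => ?_)
      rw [Real.norm_eq_abs]; exact hTabs ω
    -- split the integral
    have hsplit : (∫ ω, w (X ω) * ∑ ℓ, (∑ k, v k * ψ ℓ ω k) ^ 2 ∂Q)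
        = (∫ ω, (T ω - π) ^ 2 * A1 (X ω) ∂Q) + (∫ ω, (T ω - π) * A2 (X ω) ∂Q)
          + ∫ ω, A3 (X ω) ∂Q := by
      have ia : Integrable (fun ω => (T ω - π) ^ 2 * A1 (X ω)
          + (T ω - π) * A2 (X ω)) Q := Iq1.add Iq2
      rw [integral_congr_ae (Filter.Eventually.of_forall hdecomp),
        integral_add ia I3, integral_add Iq1 Iq2]
    -- independence
    have ind1 : IndepFun (fun ω => (T ω - π) ^ 2) (fun ω => A1 (X ω)) Q :=
      hindepQ.comp ((measurable_id.sub_const π).pow_const 2) hA1m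
    have ind2 : IndepFun (fun ω => (T ω - π)) (fun ω => A2 (X ω)) Q :=
      hindepQ.comp (measurable_id.sub_const π) hA2m
    have hTsqi : Integrable (fun ω => (T ω - π) ^ 2) Q := by
      refine Integrable.mono' (integrable_const 1)
        ((hT.sub measurable_const).pow_const 2).aestronglyMeasurable
        (Filter.Eventually.of_forall fun ω => ?_)
      rw [Real.norm_eq_abs, abs_of_nonneg (sq_nonneg _)]
      nlinarith [hTabs ω, abs_nonneg (T ω - π), sq_abs (T ω - π)]
    have hTdi : Integrable (fun ω => T ω - π) Q := hTi.sub (integrable_const π)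
    have e1 : (∫ ω, (T ω - π) ^ 2 * A1 (X ω) ∂Q)
        = π * (1 - π) * ∫ ω, A1 (X ω) ∂Q := by
      have h := ind1.integral_fun_mul_eq_mul_integral hTsqi.aestronglyMeasurable I1.aestronglyMeasurable
      have h' : (∫ ω, (T ω - π) ^ 2 * A1 (X ω) ∂Q)
          = (∫ ω, (T ω - π) ^ 2 ∂Q) * ∫ ω, A1 (X ω) ∂Q := h
      rw [h', hTm2]
    have e2 : (∫ ω, (T ω - π) * A2 (X ω) ∂Q) = 0 := by
      have h := ind2.integral_fun_mul_eq_mul_integral hTdi.aestronglyMeasurable I2.aestronglyMeasurable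
      have h' : (∫ ω, (T ω - π) * A2 (X ω) ∂Q)
          = (∫ ω, (T ω - π) ∂Q) * ∫ ω, A2 (X ω) ∂Q := h
      rw [h', hTm1, zero_mul]
    -- transport integrals of functions of X to P
    have htrans : ∀ (h : 𝒳 → ℝ), Measurable h →
        (∫ ω, w (X ω) * h (X ω) ∂Q) = ∫ ω, h (X ω) ∂P := by
      intro h hm
      have h1 : (∫ ω, h (X ω) ∂P) = ∫ x, h x ∂(P.map X) :=
        (integral_map hX.aemeasurable hm.aestronglyMeasurable).symm
      have hdid2 : (fun x : 𝒳 => ENNReal.ofReal (w x))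
          = fun x : 𝒳 => ((w x).toNNReal : ℝ≥0∞) := rfl
      rw [h1, hdens, hdid2, integral_withDensity_eq_integral_smul hwm.real_toNNReal]
      have h2 : (∫ x, (w x).toNNReal • h x ∂(Q.map X)) = ∫ x, w x * h x ∂(Q.map X) := by
        refine integral_congr_ae (Filter.Eventually.of_forall fun x => ?_)
        simp only [NNReal.smul_def, Real.coe_toNNReal _ (hw0 _), smul_eq_mul]
      rw [h2, integral_map (f := fun x => w x * h x) hX.aemeasurable (hwm.mul hm).aestronglyMeasurable]
    -- Gram identities
    have gramM : ∀ x' : Fin a → ℝ,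
        (∫ ω, ∑ ℓ, (∑ i, x' i * f ℓ (X ω) i) ^ 2 ∂P)
          = ∑ i, ∑ j, x' i * x' j
              * (Matrix.of fun i j : Fin a =>
                  ∑ ℓ, ∫ ω, f ℓ (X ω) i * f ℓ (X ω) j ∂P) i j := by
      intro x'
      have hpt : ∀ ω, (∑ ℓ, (∑ i, x' i * f ℓ (X ω) i) ^ 2)
          = ∑ ℓ, ∑ i, ∑ j, x' i * x' j * (f ℓ (X ω) i * f ℓ (X ω) j) := by
        intro ω
        refine Finset.sum_congr rfl fun ℓ _ => ?_
        rw [sq, Finset.sum_mul_sum]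
        exact Finset.sum_congr rfl fun i _ => Finset.sum_congr rfl fun j _ => by ring
      rw [integral_congr_ae (Filter.Eventually.of_forall hpt)]
      rw [integral_finset_sum _ (fun ℓ _ => integrable_finset_sum _ fun i _ =>
        integrable_finset_sum _ fun j _ => (hMIntP ℓ i j).const_mul _)]
      have hstep : ∀ ℓ : Fin p, (∫ ω, ∑ i, ∑ j, x' i * x' j
            * (f ℓ (X ω) i * f ℓ (X ω) j) ∂P)
          = ∑ i, ∑ j, x' i * x' j * ∫ ω, f ℓ (X ω) i * f ℓ (X ω) j ∂P := by
        intro ℓ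
        rw [integral_finset_sum _ (fun i _ => integrable_finset_sum _ fun j _ =>
          (hMIntP ℓ i j).const_mul _)]
        refine Finset.sum_congr rfl fun i _ => ?_
        rw [integral_finset_sum _ (fun j _ => (hMIntP ℓ i j).const_mul _)]
        exact Finset.sum_congr rfl fun j _ => integral_const_mul _ _
      simp only [hstep]
      rw [Finset.sum_comm]
      refine Finset.sum_congr rfl fun i _ => ?_
      rw [Finset.sum_comm]
      refine Finset.sum_congr rfl fun j _ => ?_
      rw [Matrix.of_apply, Finset.mul_sum]
    have gramG : ∀ x' : Fin b → ℝ,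
        (∫ ω, ∑ ℓ, (∑ j, x' j * g ℓ (X ω) j) ^ 2 ∂P)
          = ∑ i, ∑ j, x' i * x' j
              * (Matrix.of fun i j : Fin b =>
                  ∑ ℓ, ∫ ω, g ℓ (X ω) i * g ℓ (X ω) j ∂P) i j := by
      intro x'
      have hpt : ∀ ω, (∑ ℓ, (∑ j, x' j * g ℓ (X ω) j) ^ 2)
          = ∑ ℓ, ∑ i, ∑ j, x' i * x' j * (g ℓ (X ω) i * g ℓ (X ω) j) := by
        intro ω
        refine Finset.sum_congr rfl fun ℓ _ => ?_
        rw [sq, Finset.sum_mul_sum]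
        exact Finset.sum_congr rfl fun i _ => Finset.sum_congr rfl fun j _ => by ring
      rw [integral_congr_ae (Filter.Eventually.of_forall hpt)]
      rw [integral_finset_sum _ (fun ℓ _ => integrable_finset_sum _ fun i _ =>
        integrable_finset_sum _ fun j _ => (hGIntP ℓ i j).const_mul _)]
      have hstep : ∀ ℓ : Fin p, (∫ ω, ∑ i, ∑ j, x' i * x' j
            * (g ℓ (X ω) i * g ℓ (X ω) j) ∂P)
          = ∑ i, ∑ j, x' i * x' j * ∫ ω, g ℓ (X ω) i * g ℓ (X ω) j ∂P := by
        intro ℓ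
        rw [integral_finset_sum _ (fun i _ => integrable_finset_sum _ fun j _ =>
          (hGIntP ℓ i j).const_mul _)]
        refine Finset.sum_congr rfl fun i _ => ?_
        rw [integral_finset_sum _ (fun j _ => (hGIntP ℓ i j).const_mul _)]
        exact Finset.sum_congr rfl fun j _ => integral_const_mul _ _
      simp only [hstep]
      rw [Finset.sum_comm]
      refine Finset.sum_congr rfl fun i _ => ?_
      rw [Finset.sum_comm]
      refine Finset.sum_congr rfl fun j _ => ?_
      rw [Matrix.of_apply, Finset.mul_sum]
    -- positivity of the Gram quadratic forms
    have hMsym : ∀ i j : Fin a, (Matrix.of fun i j : Fin a =>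
        ∑ ℓ, ∫ ω, f ℓ (X ω) i * f ℓ (X ω) j ∂P) i j
        = (Matrix.of fun i j : Fin a =>
        ∑ ℓ, ∫ ω, f ℓ (X ω) i * f ℓ (X ω) j ∂P) j i := by
      intro i j
      simp only [Matrix.of_apply]
      refine Finset.sum_congr rfl fun ℓ _ => ?_
      exact integral_congr_ae (Filter.Eventually.of_forall fun ω => mul_comm _ _)
    have hGsym : ∀ i j : Fin b, (Matrix.of fun i j : Fin b =>
        ∑ ℓ, ∫ ω, g ℓ (X ω) i * g ℓ (X ω) j ∂P) i j
        = (Matrix.of fun i j : Fin b =>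
        ∑ ℓ, ∫ ω, g ℓ (X ω) i * g ℓ (X ω) j ∂P) j i := by
      intro i j
      simp only [Matrix.of_apply]
      refine Finset.sum_congr rfl fun ℓ _ => ?_
      exact integral_congr_ae (Filter.Eventually.of_forall fun ω => mul_comm _ _)
    have hMpsd : ∀ x' : Fin a → ℝ, 0 ≤ x' ⬝ᵥ (Matrix.of fun i j : Fin a =>
        ∑ ℓ, ∫ ω, f ℓ (X ω) i * f ℓ (X ω) j ∂P) *ᵥ x' := by
      intro x'
      rw [dot_expand, ← gramM]
      exact integral_nonneg fun ω => Finset.sum_nonneg fun ℓ _ => sq_nonneg _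
    have hGpsd : ∀ x' : Fin b → ℝ, 0 ≤ x' ⬝ᵥ (Matrix.of fun i j : Fin b =>
        ∑ ℓ, ∫ ω, g ℓ (X ω) i * g ℓ (X ω) j ∂P) *ᵥ x' := by
      intro x'
      rw [dot_expand, ← gramG]
      exact integral_nonneg fun ω => Finset.sum_nonneg fun ℓ _ => sq_nonneg _
    -- values of the integrals over P
    have hI1P : (∫ ω, A1 (X ω) ∂Q) = ∫ ω, ∑ ℓ, (U ℓ (X ω)) ^ 2 ∂P := by
      have := htrans (fun x => ∑ ℓ, (U ℓ x) ^ 2)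
        (Finset.measurable_sum _ fun ℓ _ => (hUmeas θ ℓ).pow_const 2)
      rw [← this]
    have hI3P : (∫ ω, A3 (X ω) ∂Q) = ∫ ω, ∑ ℓ, (S ℓ (X ω)) ^ 2 ∂P := by
      have := htrans (fun x => ∑ ℓ, (S ℓ x) ^ 2)
        (Finset.measurable_sum _ fun ℓ _ => (hSmeas β' ℓ).pow_const 2)
      rw [← this]
    have hI1nn : 0 ≤ ∫ ω, A1 (X ω) ∂Q :=
      integral_nonneg fun ω => hA1nn _
    have hI3nn : 0 ≤ ∫ ω, A3 (X ω) ∂Q :=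
      integral_nonneg fun ω => hA3nn _
    -- a component is nonzero
    have hθβ : θ ≠ 0 ∨ β' ≠ 0 := by
      by_contra hcon
      push_neg at hcon
      obtain ⟨h1, h2⟩ := hcon
      apply hv
      funext k
      cases k with
      | inl i => exact congrFun h1 i
      | inr j => exact congrFun h2 j
    rw [hsplit, e1, e2]
    rcases hθβ with hθne | hβne
    · have hMp : 0 < θ ⬝ᵥ (Matrix.of fun i j : Fin a =>
          ∑ ℓ, ∫ ω, f ℓ (X ω) i * f ℓ (X ω) j ∂P) *ᵥ θ :=
        pos_of_isUnit hMsym hMpsd hMinv hθne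
      have h1 : 0 < ∫ ω, A1 (X ω) ∂Q := by
        rw [hI1P]
        have : (∫ ω, ∑ ℓ, (U ℓ (X ω)) ^ 2 ∂P)
            = θ ⬝ᵥ (Matrix.of fun i j : Fin a =>
              ∑ ℓ, ∫ ω, f ℓ (X ω) i * f ℓ (X ω) j ∂P) *ᵥ θ := by
          rw [dot_expand, ← gramM]
        rw [this]
        exact hMp
      have hππ : 0 < π * (1 - π) := by nlinarith
      nlinarith
    · have hGp : 0 < β' ⬝ᵥ (Matrix.of fun i j : Fin b =>
          ∑ ℓ, ∫ ω, g ℓ (X ω) i * g ℓ (X ω) j ∂P) *ᵥ β' :=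
        pos_of_isUnit hGsym hGpsd hGinv hβne
      have h3 : 0 < ∫ ω, A3 (X ω) ∂Q := by
        rw [hI3P]
        have : (∫ ω, ∑ ℓ, (S ℓ (X ω)) ^ 2 ∂P)
            = β' ⬝ᵥ (Matrix.of fun i j : Fin b =>
              ∑ ℓ, ∫ ω, g ℓ (X ω) i * g ℓ (X ω) j ∂P) *ᵥ β' := by
          rw [dot_expand, ← gramG]
        rw [this]
        exact hGp
      have hππ : 0 < π * (1 - π) := by nlinarith
      nlinarith
  -- unique minimizer over the sum type
  have keyQ := existsUnique_quad_min Q (fun ω => Y ω) (fun ω => w (X ω)) ψ hIntψ hpos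
  -- transfer to pairs
  have hwlsQ : ∀ θβ : (Fin a → ℝ) × (Fin b → ℝ),
      wlsObj Q X T Y f g (fun ω => w (X ω)) π θβ
        = ∫ ω, w (X ω) * ∑ ℓ, (Y ω ℓ - ∑ k, (Sum.elim θβ.1 θβ.2) k * ψ ℓ ω k) ^ 2 ∂Q := by
    intro θβ
    simp only [wlsObj]
    exact integral_congr_ae (Filter.Eventually.of_forall (hobj θβ))
  have EQ : ∃! θβ : (Fin a → ℝ) × (Fin b → ℝ),
      ∀ θβ', wlsObj Q X T Y f g (fun ω => w (X ω)) π θβ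
        ≤ wlsObj Q X T Y f g (fun ω => w (X ω)) π θβ' := by
    obtain ⟨v, hv, huniq⟩ := keyQ
    refine ⟨(v ∘ Sum.inl, v ∘ Sum.inr), fun q => ?_, fun y hy => ?_⟩
    · rw [hwlsQ, hwlsQ, Sum.elim_comp_inl_inr]
      exact hv _
    · have hyv : ∀ v' : (Fin a ⊕ Fin b) → ℝ, (∫ ω, w (X ω)
          * ∑ ℓ, (Y ω ℓ - ∑ k, (Sum.elim y.1 y.2) k * ψ ℓ ω k) ^ 2 ∂Q)
          ≤ ∫ ω, w (X ω) * ∑ ℓ, (Y ω ℓ - ∑ k, v' k * ψ ℓ ω k) ^ 2 ∂Q := by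
        intro v'
        have := hy (v' ∘ Sum.inl, v' ∘ Sum.inr)
        rw [hwlsQ, hwlsQ, Sum.elim_comp_inl_inr] at this
        exact this
      have heq := huniq (Sum.elim y.1 y.2) hyv
      have h1 : y.1 = v ∘ Sum.inl := by
        funext i; exact congrFun heq (Sum.inl i)
      have h2 : y.2 = v ∘ Sum.inr := by
        funext j; exact congrFun heq (Sum.inr j)
      exact Prod.ext h1 h2
  refine ⟨EQ, ?_, ?_⟩
  · obtain ⟨θβ0, h0, hu⟩ := EQ
    refine ⟨θβ0, fun q => ?_, fun y hy => ?_⟩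
    · rw [objEq, objEq]
      exact h0 q
    · refine hu y fun q => ?_
      have := hy q
      rwa [objEq, objEq] at this
  · intro θβ θβ' h1 h2
    obtain ⟨θβ0, h0, hu⟩ := EQ
    have h2' : ∀ q, wlsObj Q X T Y f g (fun ω => w (X ω)) π θβ'
        ≤ wlsObj Q X T Y f g (fun ω => w (X ω)) π q := by
      intro q
      have := h2 q
      rwa [objEq, objEq] at this
    rw [hu θβ h1, hu θβ' h2']
end
end
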